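/- arXiv:1711.01787 — 8 statements merged into one kernel-verified Lean document; each statement's English description precedes it below -/
import Mathlib

section
/- If K ⊆ L are convex bodies in R^n in John's position, then L ⊆ -nK. -/
open Pointwise

noncomputable section

/-- Euclidean space ℝⁿ. -/
abbrev E (n : ℕ) := EuclideanSpace ℝ (Fin n)

/-- A convex body: compact, convex, with nonempty interior. -/
def IsConvexBody {n : ℕ} (K : Set (E n)) : Prop :=
  IsCompact K ∧ Convex ℝ K ∧ (interior K).Nonempty

/-- The polar body `K° = {x : ⟨x, y⟩ ≤ 1 for all y ∈ K}`. -/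
def polarBody {n : ℕ} (K : Set (E n)) : Set (E n) :=
  {x | ∀ y ∈ K, (inner ℝ x y : ℝ) ≤ 1}

/-- The Banach-Mazur distance:
`inf {r > 0 : K + u ⊆ T(L + v) ⊆ r(K + u)}` over invertible linear `T` and
translations `u, v`. -/
def bmDist {n : ℕ} (K L : Set (E n)) : ℝ :=
  sInf {r : ℝ | 0 < r ∧ ∃ (T : E n ≃ₗ[ℝ] E n) (u v : E n),
    (u +ᵥ K) ⊆ (T : E n →ₗ[ℝ] E n) '' (v +ᵥ L) ∧
    (T : E n →ₗ[ℝ] E n) '' (v +ᵥ L) ⊆ r • (u +ᵥ K)}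

/-- The Grünbaum distance: `inf |r|` over nondegenerate affine images
`K'` of `K` and `L'` of `L` with `K' ⊆ L' ⊆ r • K'` (`r` possibly negative). -/
def grDist {n : ℕ} (K L : Set (E n)) : ℝ :=
  sInf {s : ℝ | ∃ (r : ℝ) (F G : E n ≃ᵃ[ℝ] E n), s = |r| ∧
    (F : E n → E n) '' K ⊆ (G : E n → E n) '' L ∧
    (G : E n → E n) '' L ⊆ r • ((F : E n → E n) '' K)}

/-- The conditions of John's decomposition for given contact pairs
`(u i, v i)` and weights `a i`. -/
def IsJohnData {n : ℕ} (K L : Set (E n)) {m : ℕ}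
    (u v : Fin m → E n) (a : Fin m → ℝ) : Prop :=
  (∀ i, u i ∈ frontier K ∩ frontier L) ∧
  (∀ i, v i ∈ frontier (polarBody K) ∩ frontier (polarBody L)) ∧
  (∀ i, 0 < a i) ∧
  (∀ x : E n, x = ∑ i, (a i * (inner ℝ x (v i) : ℝ)) • u i) ∧
  (∑ i, a i • u i = 0) ∧
  (∑ i, a i • v i = 0) ∧
  (∀ i, (inner ℝ (u i) (v i) : ℝ) = 1)

/-- `K ⊆ L` are in John's position. -/
def IsJohnPosition {n : ℕ} (K L : Set (E n)) : Prop :=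
  K ⊆ L ∧ ∃ (m : ℕ), 0 < m ∧ ∃ (u v : Fin m → E n) (a : Fin m → ℝ),
    IsJohnData K L u v a

/-- A triangle in the plane: the convex hull of three affinely
independent points. -/
def IsTriangle (K : Set (E 2)) : Prop :=
  ∃ p : Fin 3 → E 2, AffineIndependent ℝ p ∧ K = convexHull ℝ (Set.range p)

/-- A centrally symmetric set, with center `c`. -/
def IsCentrallySymmetric {n : ℕ} (L : Set (E n)) : Prop :=
  ∃ c : E n, ∀ x, x ∈ L ↔ (2 : ℝ) • c - x ∈ L

/-- If `K ⊆ L` are convex bodies in `ℝⁿ` in John's position, then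
`L ⊆ -n • K`. -/
theorem stmt2 (n : ℕ) (K L : Set (E n)) (hK : IsConvexBody K)
    (hL : IsConvexBody L) (hJ : IsJohnPosition K L) :
    L ⊆ (-(n : ℝ)) • K := by
  obtain ⟨hKL, m, hm, u, v, a, hu, hv, ha, hdec, hsu, hsv, huv⟩ := hJ
  have hKclosed : IsClosed K := hK.1.isClosed
  have huK : ∀ i, u i ∈ K := by
    intro i
    have h := (hu i).1
    rw [frontier, hKclosed.closure_eq] at h
    exact h.1
  have hLpolar_closed : IsClosed (polarBody L) := by
    have : polarBody L = ⋂ y ∈ L, {x : E n | (inner ℝ x y : ℝ) ≤ 1} := by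
      ext z; simp [polarBody]
    rw [this]
    exact isClosed_biInter fun y _ =>
      isClosed_le (Continuous.inner continuous_id continuous_const) continuous_const
  have hvL : ∀ i, v i ∈ polarBody L := by
    intro i
    have h := (hv i).2
    rw [frontier, hLpolar_closed.closure_eq] at h
    exact h.1
  -- trace : ∑ a i = n
  have hcoord : ∀ j : Fin n, (1 : ℝ) = ∑ i, a i * v i j * u i j := by
    intro j
    have h : (EuclideanSpace.proj j : E n →L[ℝ] ℝ) (EuclideanSpace.single j 1)
        = (EuclideanSpace.proj j : E n →L[ℝ] ℝ)
            (∑ i, (a i * (inner ℝ (EuclideanSpace.single j (1:ℝ)) (v i) : ℝ)) • u i) := by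
      rw [← hdec (EuclideanSpace.single j 1)]
    simp only [map_sum, map_smul, smul_eq_mul, PiLp.proj_apply,
      EuclideanSpace.single_apply, if_pos rfl, eq_self_iff_true, if_true] at h
    rw [h]
    refine Finset.sum_congr rfl fun i _ => ?_
    congr 1
    simp [EuclideanSpace.inner_single_left]
  have hinner : ∀ i, (inner ℝ (u i) (v i) : ℝ) = ∑ j, u i j * v i j := by
    intro i
    simp [PiLp.inner_apply, RCLike.inner_apply, mul_comm]
  have htrace : ∑ i, a i = (n : ℝ) := by
    have h1 : ((n : ℝ)) = ∑ j : Fin n, (1 : ℝ) := by simp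
    have h2 : (∑ j : Fin n, ∑ i, a i * v i j * u i j) = ∑ i, a i := by
      rw [Finset.sum_comm]
      refine Finset.sum_congr rfl fun i _ => ?_
      have : (∑ j, a i * v i j * u i j) = a i * ∑ j, u i j * v i j := by
        rw [Finset.mul_sum]; refine Finset.sum_congr rfl fun j _ => by ring
      rw [this, ← hinner i, huv i, mul_one]
    rw [h1]
    rw [Finset.sum_congr rfl fun j _ => hcoord j, h2]
  intro x hx
  set c : Fin m → ℝ := fun i => a i * (1 - (inner ℝ x (v i) : ℝ)) with hc
  have hc0 : ∀ i, 0 ≤ c i := by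
    intro i
    have h1 : (inner ℝ (v i) x : ℝ) ≤ 1 := hvL i x hx
    have h2 : (inner ℝ x (v i) : ℝ) ≤ 1 := by rwa [real_inner_comm]
    exact mul_nonneg (ha i).le (by linarith)
  have hsum0 : (∑ i, a i * (inner ℝ x (v i) : ℝ)) = 0 := by
    have : (inner ℝ x (∑ i, a i • v i) : ℝ) = ∑ i, a i * (inner ℝ x (v i) : ℝ) := by
      rw [inner_sum]
      exact Finset.sum_congr rfl fun i _ => real_inner_smul_right x (v i) (a i)
    rw [← this, hsv, inner_zero_right]
  have hsumc : ∑ i, c i = (n : ℝ) := by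
    have : ∑ i, c i = (∑ i, a i) - ∑ i, a i * (inner ℝ x (v i) : ℝ) := by
      rw [← Finset.sum_sub_distrib]
      exact Finset.sum_congr rfl fun i _ => by simp [hc]; ring
    rw [this, htrace, hsum0, sub_zero]
  have hxeq : -x = ∑ i, c i • u i := by
    have h1 : (∑ i, c i • u i) = (∑ i, a i • u i) - ∑ i, (a i * (inner ℝ x (v i) : ℝ)) • u i := by
      rw [← Finset.sum_sub_distrib]
      refine Finset.sum_congr rfl fun i _ => ?_
      rw [← sub_smul]
      congr 1
      simp [hc]; ring
    rw [h1, hsu, ← hdec x, zero_sub]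
  rcases Nat.eq_zero_or_pos n with h0 | hn
  · subst h0
    obtain ⟨k0, hk0⟩ := hK.2.2.mono interior_subset
    refine Set.mem_smul_set.mpr ⟨k0, hk0, ?_⟩
    have hx0 : x = 0 := by ext j; exact j.elim0
    simp [hx0]
  · have hnpos : (0 : ℝ) < n := by exact_mod_cast hn
    have hk : (∑ i, (c i / n) • u i) ∈ K := by
      refine hK.2.1.sum_mem (fun i _ => div_nonneg (hc0 i) hnpos.le) ?_ (fun i _ => huK i)
      rw [← Finset.sum_div, hsumc, div_self hnpos.ne']
    refine Set.mem_smul_set.mpr ⟨_, hk, ?_⟩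
    rw [Finset.smul_sum]
    have : ∀ i, (-(n : ℝ)) • ((c i / n) • u i) = (-(c i)) • u i := by
      intro i
      rw [smul_smul]
      congr 1
      field_simp
      try ring
    rw [Finset.sum_congr rfl fun i _ => this i]
    have : (∑ i, (-(c i)) • u i) = -∑ i, c i • u i := by
      rw [← Finset.sum_neg_distrib]
      exact Finset.sum_congr rfl fun i _ => neg_smul _ _
    rw [this, ← hxeq, neg_neg]
end
end

section
/- If K ⊆ L are convex bodies in R^n in John's position with exactly n+1 contact pairs (u_i, v_i) and weights a_i, then all weights equal n/(n+1) and ⟨u_i, v_j⟩ = -1/n for all i ≠ j. -/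
open Pointwise

noncomputable section

set_option maxHeartbeats 1000000

/-- If `K ⊆ L` are convex bodies in `ℝⁿ` in John's position with exactly
`n + 1` contact pairs spanning `ℝⁿ`, then all weights equal `n / (n + 1)`
and `⟨u i, v j⟩ = -1/n` for `i ≠ j`. -/
theorem stmt4 (n : ℕ) (K L : Set (E n)) (hK : IsConvexBody K)
    (hL : IsConvexBody L) (hKL : K ⊆ L)
    (u v : Fin (n + 1) → E n) (a : Fin (n + 1) → ℝ)
    (hJ : IsJohnData K L u v a)
    (hspan : Submodule.span ℝ (Set.range u) = ⊤) :
    (∀ i, a i = (n : ℝ) / (n + 1)) ∧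
      (∀ i j, i ≠ j → (inner ℝ (u i) (v j) : ℝ) = -(1 / (n : ℝ))) := by
  classical
  obtain ⟨h1, h2, h3, h4, h5, h6, h7⟩ := hJ
  set f : (Fin (n + 1) → ℝ) →ₗ[ℝ] E n :=
    { toFun := fun c => ∑ i, c i • u i
      map_add' := by intro c d; simp [add_smul, Finset.sum_add_distrib]
      map_smul' := by intro r c; simp [smul_smul, Finset.smul_sum] } with hf
  have hfapp : ∀ c, f c = ∑ i, c i • u i := fun c => rfl
  have hfu : ∀ i, f (Pi.single i 1) = u i := by
    intro i
    rw [hfapp]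
    simp [Pi.single_apply, ite_smul]
  have hsurj : LinearMap.range f = ⊤ := by
    rw [← top_le_iff, ← hspan, Submodule.span_le]
    rintro _ ⟨i, rfl⟩
    exact ⟨Pi.single i 1, hfu i⟩
  have hker : Module.finrank ℝ (LinearMap.ker f) = 1 := by
    have h := LinearMap.finrank_range_add_finrank_ker f
    rw [hsurj, finrank_top] at h
    simp [finrank_euclideanSpace_fin] at h
    omega
  have ha0 : a ≠ 0 := by
    intro h
    have := h3 0
    rw [h] at this
    simp at this
  have hainker : a ∈ LinearMap.ker f := by
    rw [LinearMap.mem_ker, hfapp]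
    exact h5
  have hkereq : LinearMap.ker f = Submodule.span ℝ {a} := by
    refine (Submodule.eq_of_le_of_finrank_le ?_ ?_).symm
    · rw [Submodule.span_le, Set.singleton_subset_iff]; exact hainker
    · rw [hker, finrank_span_singleton ha0]
  have key : ∀ j, ∃ t : ℝ, ∀ i,
      a i * (inner ℝ (u j) (v i) : ℝ) - (if i = j then 1 else 0) = t * a i := by
    intro j
    have hc : (fun i => a i * (inner ℝ (u j) (v i) : ℝ) - if i = j then 1 else 0)
        ∈ LinearMap.ker f := by
      rw [LinearMap.mem_ker, hfapp]
      have e : ∑ i, ((a i * (inner ℝ (u j) (v i) : ℝ)) - (if i = j then 1 else 0)) • u i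
          = (∑ i, (a i * (inner ℝ (u j) (v i) : ℝ)) • u i)
            - ∑ i, (if i = j then (1 : ℝ) else 0) • u i := by
        rw [← Finset.sum_sub_distrib]
        exact Finset.sum_congr rfl fun i _ => by rw [sub_smul]
      rw [e, ← h4 (u j)]
      simp [ite_smul, Finset.sum_ite_eq']
    rw [hkereq, Submodule.mem_span_singleton] at hc
    obtain ⟨t, ht⟩ := hc
    exact ⟨t, fun i => (congrFun ht i).symm⟩
  have hs : (0 : ℝ) < ∑ i, a i := Finset.sum_pos (fun i _ => h3 i) Finset.univ_nonempty
  set s : ℝ := ∑ i, a i with hs_def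
  have hs0 : s ≠ 0 := ne_of_gt hs
  have hsum0 : ∀ j, ∑ i, a i * (inner ℝ (u j) (v i) : ℝ) = 0 := by
    intro j
    have h : (inner ℝ (u j) (∑ i, a i • v i) : ℝ) = 0 := by rw [h6, inner_zero_right]
    rw [inner_sum] at h
    rw [← h]
    exact Finset.sum_congr rfl fun i _ => (real_inner_smul_right _ _ _).symm
  have main : ∀ j, a j = s / (s + 1) ∧
      ∀ i, i ≠ j → (inner ℝ (u j) (v i) : ℝ) = -(1 / s) := by
    intro j
    obtain ⟨t, htc⟩ := key j
    have hsum : ∑ i, (a i * (inner ℝ (u j) (v i) : ℝ) - if i = j then 1 else 0)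
        = ∑ i, t * a i := Finset.sum_congr rfl fun i _ => htc i
    rw [Finset.sum_sub_distrib, hsum0 j, ← Finset.mul_sum, ← hs_def] at hsum
    simp [Finset.sum_ite_eq'] at hsum
    -- hsum should give : -1 = t * s (in some form)
    have hts : t * s = -1 := by linarith
    have ht' : t = -(1 / s) := by
      field_simp
      linarith
    refine ⟨?_, ?_⟩
    · have e1 := htc j
      rw [if_pos rfl, h7 j, mul_one] at e1
      -- e1 : a j - 1 = t * a j
      have e2 : (a j - 1) * s = t * a j * s := by rw [e1]
      rw [show t * a j * s = (t * s) * a j by ring, hts] at e2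
      have hs1 : s + 1 ≠ 0 := by positivity
      field_simp
      nlinarith [e2]
    · intro i hij
      have e2 := htc i
      rw [if_neg hij, sub_zero] at e2
      have hai : a i ≠ 0 := ne_of_gt (h3 i)
      have : (inner ℝ (u j) (v i) : ℝ) = t :=
        mul_left_cancel₀ hai (by linarith [e2])
      rw [this, ht']
  have hsn : s = n := by
    have hs1 : s + 1 ≠ 0 := by positivity
    have h' : ∑ i, a i = ∑ _i : Fin (n + 1), s / (s + 1) :=
      Finset.sum_congr rfl fun i _ => (main i).1
    rw [Finset.sum_const, Finset.card_univ, Fintype.card_fin, nsmul_eq_mul] at h'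
    have h2 : s = ((n : ℝ) + 1) * (s / (s + 1)) := by
      push_cast at h'
      exact hs_def.trans h'
    have hcalc : s * (s + 1) = ((n : ℝ) + 1) * s := by
      calc s * (s + 1) = ((n : ℝ) + 1) * (s / (s + 1)) * (s + 1) := by rw [← h2]
        _ = ((n : ℝ) + 1) * s := by field_simp
    have h3' : s * (s + 1) = s * ((n : ℝ) + 1) := by linarith
    have := mul_left_cancel₀ hs0 h3'
    linarith
  constructor
  · intro i
    rw [(main i).1, hsn]
  · intro i j hij
    rw [(main i).2 j hij.symm, hsn]
end
end

section
/- Let K ⊆ L be convex bodies in R^n with 0 in the interior of L, such that K is not contained in rL + v for any 0 < r < 1 and v ∈ R^n. Then 0 lies in the convex hull of ∂K° ∩ ∂L°. -/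
open Pointwise

noncomputable section

namespace Stmt6Aux
variable {n : ℕ} {K L : Set (E n)} {x y : E n} {c : ℝ}

/-- support function -/
def supp (K : Set (E n)) (x : E n) : ℝ := sSup ((fun y => (inner ℝ x y : ℝ)) '' K)

lemma bddAbove_img (hK : IsCompact K) (x : E n) :
    BddAbove ((fun y => (inner ℝ x y : ℝ)) '' K) :=
  (hK.image (continuous_const.inner continuous_id)).bddAbove

lemma le_supp (hK : IsCompact K) (hy : y ∈ K) : (inner ℝ x y : ℝ) ≤ supp K x :=
  le_csSup (bddAbove_img hK x) ⟨y, hy, rfl⟩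

lemma supp_le (hne : K.Nonempty) (h : ∀ y ∈ K, (inner ℝ x y : ℝ) ≤ c) :
    supp K x ≤ c :=
  csSup_le (hne.image _) (by rintro _ ⟨y, hy, rfl⟩; exact h y hy)

lemma exists_max (hK : IsCompact K) (hne : K.Nonempty) (x : E n) :
    ∃ y ∈ K, supp K x = (inner ℝ x y : ℝ) := by
  obtain ⟨y, hy, hmax⟩ := hK.exists_isMaxOn (f := fun y => (inner ℝ x y : ℝ)) hne
    ((continuous_const.inner continuous_id).continuousOn)
  exact ⟨y, hy, le_antisymm (supp_le hne fun z hz => hmax hz) (le_supp hK hy)⟩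

lemma supp_smul (hK : IsCompact K) (hne : K.Nonempty) (hc : 0 ≤ c) (x : E n) :
    supp K (c • x) = c * supp K x := by
  obtain ⟨y0, hy0, hy0e⟩ := exists_max hK hne x
  refine le_antisymm (supp_le hne fun y hy => ?_) ?_
  · rw [real_inner_smul_left]
    exact mul_le_mul_of_nonneg_left (le_supp hK hy) hc
  · rw [hy0e, ← real_inner_smul_left]
    exact le_supp hK hy0

lemma supp_zero (hK : IsCompact K) (hne : K.Nonempty) : supp K 0 = 0 := by
  obtain ⟨y, hy, hye⟩ := exists_max hK hne 0
  simp [hye]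

lemma supp_mono (hL : IsCompact L) (hne : K.Nonempty) (h : K ⊆ L) (x : E n) :
    supp K x ≤ supp L x :=
  supp_le hne fun y hy => le_supp hL (h hy)

lemma supp_continuous (hK : IsCompact K) (hne : K.Nonempty) :
    Continuous (supp K) := by
  obtain ⟨R, hR⟩ := hK.isBounded.exists_norm_le
  have hR0 : 0 ≤ R := le_trans (norm_nonneg _) (hR _ hne.choose_spec)
  have key : ∀ a b : E n, supp K a - supp K b ≤ R * dist a b := by
    intro a b
    rw [sub_le_iff_le_add]
    refine supp_le hne fun y hy => ?_
    have heq : (inner ℝ a y : ℝ) = inner ℝ b y + inner ℝ (a - b) y := by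
      rw [← inner_add_left, add_sub_cancel]
    rw [heq]
    have h1 : (inner ℝ (a - b) y : ℝ) ≤ ‖a - b‖ * ‖y‖ := real_inner_le_norm _ _
    have h2 : ‖a - b‖ * ‖y‖ ≤ ‖a - b‖ * R :=
      mul_le_mul_of_nonneg_left (hR y hy) (norm_nonneg _)
    have := le_supp (x := b) hK hy
    rw [dist_eq_norm]
    nlinarith
  have : LipschitzWith (Real.toNNReal R) (supp K) := by
    refine LipschitzWith.of_dist_le_mul fun a b => ?_
    rw [Real.dist_eq, abs_sub_le_iff]
    constructor
    · exact (key a b).trans (by rw [Real.coe_toNNReal R hR0])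
    · exact (key b a).trans (by rw [Real.coe_toNNReal R hR0, dist_comm])
  exact this.continuous

lemma polar_eq (hK : IsCompact K) (hne : K.Nonempty) :
    polarBody K = {x | supp K x ≤ 1} := by
  ext x
  constructor
  · exact fun h => supp_le hne h
  · exact fun h y hy => (le_supp hK hy).trans h


lemma isCompact_convexHull {s : Set (E n)} (hs : IsCompact s) :
    IsCompact (convexHull ℝ s) := by
  rcases s.eq_empty_or_nonempty with rfl | ⟨y0, hy0⟩
  · simp [convexHull_empty, isCompact_empty]
  set m := n + 1 with hm
  set T : Set ((Fin m → ℝ) × (Fin m → E n)) :=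
    (stdSimplex ℝ (Fin m)) ×ˢ (Set.univ.pi fun _ => s) with hT
  have hTc : IsCompact T :=
    (isCompact_stdSimplex ℝ (Fin m)).prod (isCompact_univ_pi fun _ => hs)
  set φ : (Fin m → ℝ) × (Fin m → E n) → E n := fun p => ∑ i, p.1 i • p.2 i with hφ
  have hφc : Continuous φ := by
    apply continuous_finset_sum
    intro i _
    exact ((continuous_apply i).comp continuous_fst).smul
      ((continuous_apply i).comp continuous_snd)
  have himg : convexHull ℝ s = φ '' T := by
    apply Set.Subset.antisymm
    · intro x hx
      rw [convexHull_eq_union] at hx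
      simp only [Set.mem_iUnion] at hx
      obtain ⟨t, hts, hai, hxt⟩ := hx
      have hcard : t.card ≤ m := by
        have h1 := hai.card_le_finrank_succ
        have h2 : Module.finrank ℝ ↥(vectorSpan ℝ (Set.range (Subtype.val : ↥t → E n)))
            ≤ Module.finrank ℝ (E n) := Submodule.finrank_le _
        have h3 : Module.finrank ℝ (E n) = n := finrank_euclideanSpace_fin
        rw [Fintype.card_coe] at h1
        omega
      rw [Finset.convexHull_eq] at hxt
      obtain ⟨w, hw0, hw1, hwx⟩ := hxt
      obtain ⟨e⟩ : Nonempty (↥t ↪ Fin m) := by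
        rw [Function.Embedding.nonempty_iff_card_le]
        simpa [Fintype.card_coe] using hcard
      classical
      set w' : Fin m → ℝ := fun i => if h : ∃ z : ↥t, e z = i then w h.choose else 0 with hw'
      set p : Fin m → E n := fun i => if h : ∃ z : ↥t, e z = i then (h.choose : E n) else y0
        with hp
      have hzero : ∀ i : Fin m, (¬ ∃ z : ↥t, e z = i) → w' i = 0 := by
        intro i hi; exact dif_neg hi
      have hwe : ∀ z : ↥t, w' (e z) = w z := by
        intro z
        have h : ∃ z' : ↥t, e z' = e z := ⟨z, rfl⟩
        have : h.choose = z := e.injective h.choose_spec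
        simp [hw', h, this]
      have hpe : ∀ z : ↥t, p (e z) = (z : E n) := by
        intro z
        have h : ∃ z' : ↥t, e z' = e z := ⟨z, rfl⟩
        have : h.choose = z := e.injective h.choose_spec
        simp [hp, h, this]
      have hoff : ∀ i ∈ Finset.univ, i ∉ t.attach.map e → w' i = 0 := by
        intro i _ hi
        refine hzero i fun ⟨z, hz⟩ => hi (Finset.mem_map.2 ⟨z, Finset.mem_attach _ _, hz⟩)
      have hsum1 : ∑ i, w' i = 1 := by
        rw [← Finset.sum_subset (Finset.subset_univ (t.attach.map e))
          (fun i hu hi => hoff i hu hi)]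
        rw [Finset.sum_map]
        calc ∑ z ∈ t.attach, w' (e z) = ∑ z ∈ t.attach, w z := by
              exact Finset.sum_congr rfl fun z _ => hwe z
          _ = 1 := by rw [Finset.sum_attach]; exact hw1
      have hsum2 : ∑ i, w' i • p i = x := by
        rw [← Finset.sum_subset (Finset.subset_univ (t.attach.map e))
          (fun i hu hi => by rw [hoff i hu hi, zero_smul])]
        rw [Finset.sum_map]
        calc ∑ z ∈ t.attach, w' (e z) • p (e z) = ∑ z ∈ t.attach, w (z : E n) • (z : E n) := by
              exact Finset.sum_congr rfl fun z _ => by rw [hwe z, hpe z]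
          _ = ∑ y ∈ t, w y • y := Finset.sum_attach t (fun y => w y • y)
          _ = x := by rw [← hwx, Finset.centerMass_eq_of_sum_1 _ _ hw1]; rfl
      refine ⟨(w', p), ⟨⟨?_, hsum1⟩, ?_⟩, hsum2⟩
      · intro i
        show 0 ≤ w' i
        by_cases h : ∃ z : ↥t, e z = i
        · have : w' i = w h.choose := dif_pos h
          rw [this]; exact hw0 _ h.choose.2
        · rw [hzero i h]
      · intro i _
        show p i ∈ s
        by_cases h : ∃ z : ↥t, e z = i
        · have : p i = (h.choose : E n) := dif_pos h
          rw [this]; exact hts h.choose.2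
        · have hpi : p i = y0 := dif_neg h
          rw [hpi]; exact hy0
    · rintro _ ⟨⟨w, f⟩, ⟨hw, hf⟩, rfl⟩
      apply (convex_convexHull ℝ s).sum_mem (fun i _ => hw.1 i) hw.2
      intro i _
      exact subset_convexHull ℝ s (hf i (Set.mem_univ i))
  rw [himg]
  exact hTc.image hφc

lemma frontier_polar (hK : IsCompact K) (hne : K.Nonempty) :
    frontier (polarBody K) = {x | supp K x = 1} := by
  have hc := supp_continuous hK hne
  rw [polar_eq hK hne]
  have hcl : IsClosed {x : E n | supp K x ≤ 1} :=
    isClosed_le hc continuous_const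
  ext x
  simp only [Set.mem_setOf_eq]
  constructor
  · intro hx
    have hle : supp K x ≤ 1 := hcl.frontier_subset hx
    rcases lt_or_eq_of_le hle with hlt | he
    · exfalso
      have : x ∈ interior {x : E n | supp K x ≤ 1} := by
        have : {z : E n | supp K z < 1} ∈ nhds x :=
          (isOpen_lt hc continuous_const).mem_nhds hlt
        exact mem_interior_iff_mem_nhds.2 (Filter.mem_of_superset this
          (fun z hz => show supp K z ≤ 1 from le_of_lt hz))
      exact hx.2 this
    · exact he
  · intro hx
    constructor
    · exact subset_closure (show x ∈ {x : E n | supp K x ≤ 1} from hx.le)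
    · intro hint
      have hmem : {z : E n | supp K z ≤ 1} ∈ nhds x := mem_interior_iff_mem_nhds.1 hint
      have htend : Filter.Tendsto (fun t : ℝ => t • x) (nhdsWithin 1 (Set.Ioi 1)) (nhds x) := by
        have : Filter.Tendsto (fun t : ℝ => t • x) (nhds 1) (nhds x) := by
          have := (show Continuous (fun t : ℝ => t • x) from continuous_id.smul continuous_const).tendsto (1 : ℝ)
          simpa using this
        exact this.mono_left nhdsWithin_le_nhds
      have hev : ∀ᶠ t in nhdsWithin (1:ℝ) (Set.Ioi 1),
          (fun t : ℝ => t • x) t ∈ {z : E n | supp K z ≤ 1} := htend.eventually_mem hmem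
      have hev2 : ∀ᶠ t in nhdsWithin (1:ℝ) (Set.Ioi 1), t ∈ Set.Ioi (1:ℝ) :=
        self_mem_nhdsWithin
      obtain ⟨t, ht1, ht2⟩ := (hev.and hev2).exists
      have : supp K (t • x) = t := by
        rw [supp_smul hK hne (by linarith [Set.mem_Ioi.1 ht2] : (0:ℝ) ≤ t), hx, mul_one]
      simp only [Set.mem_setOf_eq] at ht1
      rw [this] at ht1
      exact absurd ht1 (not_le.2 (Set.mem_Ioi.1 ht2))

lemma polar_isClosed (hK : IsCompact K) (hne : K.Nonempty) :
    IsClosed (polarBody K) := by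
  rw [polar_eq hK hne]
  exact isClosed_le (supp_continuous hK hne) continuous_const

end Stmt6Aux

open Stmt6Aux in
set_option maxHeartbeats 1000000 in
theorem stmt6_aux (n : ℕ) (K L : Set (E n)) (hK : IsCompact K ∧ Convex ℝ K ∧ (interior K).Nonempty)
    (hL : IsCompact L ∧ Convex ℝ L ∧ (interior L).Nonempty) (hKL : K ⊆ L) (h0 : (0 : E n) ∈ interior L)
    (hmin : ¬ ∃ (r : ℝ) (v : E n), 0 < r ∧ r < 1 ∧ K ⊆ v +ᵥ (r • L)) :
    (0 : E n) ∈ convexHull ℝ (frontier (polarBody K) ∩ frontier (polarBody L)) := by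
  classical
  by_contra hcon
  have hKc : IsCompact K := hK.1
  have hKne : K.Nonempty := hK.2.2.mono interior_subset
  have hLc : IsCompact L := hL.1
  have hLne : L.Nonempty := ⟨0, interior_subset h0⟩
  -- a ball around the origin inside L
  obtain ⟨ε, hε, hball⟩ := Metric.mem_nhds_iff.1 (mem_interior_iff_mem_nhds.1 h0)
  have hballpt : ∀ w : E n, w ≠ 0 → ((ε / 2) * ‖w‖⁻¹) • w ∈ L := by
    intro w hw
    apply hball
    rw [Metric.mem_ball, dist_zero_right, norm_smul]
    have hwn : 0 < ‖w‖ := norm_pos_iff.2 hw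
    have : ‖(ε / 2) * ‖w‖⁻¹‖ = (ε / 2) * ‖w‖⁻¹ := by
      rw [Real.norm_eq_abs, abs_of_pos (by positivity)]
    rw [this]
    rw [mul_assoc, inv_mul_cancel₀ hwn.ne', mul_one]
    linarith
  have hinnerpt : ∀ w : E n, w ≠ 0 →
      (inner ℝ w (((ε / 2) * ‖w‖⁻¹) • w) : ℝ) = (ε / 2) * ‖w‖ := by
    intro w hw
    have hwn : 0 < ‖w‖ := norm_pos_iff.2 hw
    rw [real_inner_smul_right, real_inner_self_eq_norm_sq]
    field_simp
  have hsuppL_pos : ∀ w : E n, w ≠ 0 → (ε / 2) * ‖w‖ ≤ supp L w := by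
    intro w hw
    rw [← hinnerpt w hw]
    exact le_supp hLc (hballpt w hw)
  -- the polar of L is compact
  have hPLcl : IsClosed (polarBody L) := polar_isClosed hLc hLne
  have hPLbd : Bornology.IsBounded (polarBody L) := by
    rw [isBounded_iff_forall_norm_le]
    refine ⟨2 / ε, fun x hx => ?_⟩
    rcases eq_or_ne x 0 with rfl | hx0
    · simp; positivity
    · have h1 : (ε / 2) * ‖x‖ ≤ supp L x := hsuppL_pos x hx0
      have h2 : supp L x ≤ 1 := supp_le hLne hx
      have hεp : 0 < ε / 2 := by linarith
      rw [le_div_iff₀ hε]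
      nlinarith
  have hPLcomp : IsCompact (polarBody L) :=
    Metric.isCompact_of_isClosed_isBounded hPLcl hPLbd
  -- the boundary of the polar of L
  set C : Set (E n) := frontier (polarBody L) with hC
  have hCsub : C ⊆ polarBody L := hPLcl.frontier_subset
  have hCcomp : IsCompact C := hPLcomp.of_isClosed_subset isClosed_frontier hCsub
  have hCeq : C = {x | supp L x = 1} := frontier_polar hLc hLne
  -- the contact set S and separation
  set S : Set (E n) := frontier (polarBody K) ∩ frontier (polarBody L) with hS
  have hSsub : S ⊆ polarBody L := Set.inter_subset_right.trans hCsub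
  have hScomp : IsCompact S :=
    hPLcomp.of_isClosed_subset (isClosed_frontier.inter isClosed_frontier) hSsub
  have hhull : IsCompact (convexHull ℝ S) := isCompact_convexHull hScomp
  obtain ⟨f, u, hf0, hfS⟩ :=
    geometric_hahn_banach_point_closed (convex_convexHull ℝ S) hhull.isClosed hcon
  rw [map_zero] at hf0
  set v : E n := (InnerProductSpace.toDual ℝ (E n)).symm f with hv
  have hvz : ∀ z : E n, (inner ℝ v z : ℝ) = f z := fun z =>
    InnerProductSpace.toDual_symm_apply
  have hSsep : ∀ x ∈ S, u < (inner ℝ v x : ℝ) := by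
    intro x hx
    rw [hvz]
    exact hfS x (subset_convexHull ℝ S hx)
  -- the "far from contact" part D of C
  set D : Set (E n) := C ∩ {x | (inner ℝ v x : ℝ) ≤ u / 2} with hD
  have hDcomp : IsCompact D :=
    hCcomp.inter_right (isClosed_le (continuous_const.inner continuous_id) continuous_const)
  have hKle1 : ∀ x ∈ C, supp K x ≤ 1 := by
    intro x hx
    have := supp_mono hLc hKne hKL x
    rw [hCeq] at hx
    linarith [hx.le, this]
  have hDlt1 : ∀ x ∈ D, supp K x < 1 := by
    intro x hx
    rcases lt_or_eq_of_le (hKle1 x hx.1) with h | h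
    · exact h
    · exfalso
      have hxS : x ∈ S := by
        constructor
        · rw [frontier_polar hKc hKne]; exact h
        · exact hx.1
      have := hSsep x hxS
      have := hx.2
      simp only [Set.mem_setOf_eq] at this
      linarith
  -- maximum of supp K on D
  obtain ⟨m, hm1, hmD⟩ : ∃ m : ℝ, m < 1 ∧ ∀ x ∈ D, supp K x ≤ m := by
    rcases D.eq_empty_or_nonempty with hDe | hDne
    · exact ⟨0, one_pos, by simp [hDe]⟩
    · obtain ⟨x0, hx0, hmax⟩ := hDcomp.exists_isMaxOn hDne
        (supp_continuous hKc hKne).continuousOn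
      exact ⟨supp K x0, hDlt1 x0 hx0, fun x hx => hmax hx⟩
  set m' : ℝ := max m 0 with hm'
  have hm'0 : 0 ≤ m' := le_max_right _ _
  have hm'1 : m' < 1 := max_lt hm1 one_pos
  -- bound on inner products over C
  set M : ℝ := ‖v‖ * (2 / ε) + 1 with hM
  have hMpos : 0 < M := by positivity
  have hMb : ∀ x ∈ C, |(inner ℝ x v : ℝ)| ≤ M := by
    intro x hx
    have h1 : |(inner ℝ x v : ℝ)| ≤ ‖x‖ * ‖v‖ := abs_real_inner_le_norm _ _
    have h2 : ‖x‖ ≤ 2 / ε := by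
      rcases eq_or_ne x 0 with rfl | hx0
      · simp; positivity
      · have ha : (ε / 2) * ‖x‖ ≤ supp L x := hsuppL_pos x hx0
        have hb : supp L x ≤ 1 := supp_le hLne (hCsub hx)
        have hεp : 0 < ε / 2 := by linarith
        rw [le_div_iff₀ hε]
        nlinarith
    calc |(inner ℝ x v : ℝ)| ≤ ‖x‖ * ‖v‖ := h1
      _ ≤ (2 / ε) * ‖v‖ := mul_le_mul_of_nonneg_right h2 (norm_nonneg v)
      _ = ‖v‖ * (2 / ε) := mul_comm _ _
      _ ≤ M := by rw [hM]; linarith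
  -- choose t and r
  have hu : 0 < u := hf0
  set t : ℝ := min ((1 - m') / (2 * M)) 1 with ht
  have ht0 : 0 < t := lt_min (div_pos (by linarith) (by positivity)) one_pos
  set r : ℝ := max (1 - t * (u / 2)) ((1 + m') / 2) with hr
  have hr1 : r < 1 := by
    apply max_lt
    · nlinarith
    · linarith
  have hr0 : 0 < r := lt_of_lt_of_le (by linarith) (le_max_right _ _)
  clear_value m' M t r
  -- main bound
  have hbound : ∀ x ∈ C, supp K x - t * (inner ℝ x v : ℝ) ≤ r := by
    intro x hx
    by_cases hxd : (inner ℝ v x : ℝ) ≤ u / 2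
    · have hxD : x ∈ D := ⟨hx, hxd⟩
      have h1 : supp K x ≤ m' := (hmD x hxD).trans (by rw [hm']; exact le_max_left _ _)
      have h2 : |(inner ℝ x v : ℝ)| ≤ M := hMb x hx
      have h3 : t ≤ (1 - m') / (2 * M) := by rw [ht]; exact min_le_left _ _
      have h4 : - (t * (inner ℝ x v : ℝ)) ≤ t * M := by
        have h4a := neg_abs_le (inner ℝ x v : ℝ)
        nlinarith
      have h5 : t * M ≤ (1 - m') / 2 := by
        rw [le_div_iff₀ (by positivity : (0:ℝ) < 2 * M)] at h3
        nlinarith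
      have h6 : (1 + m') / 2 ≤ r := by rw [hr]; exact le_max_right _ _
      linarith
    · push_neg at hxd
      have h1 : supp K x ≤ 1 := hKle1 x hx
      have h2 : u / 2 < (inner ℝ x v : ℝ) := by rwa [real_inner_comm]
      have h3 : 1 - t * (u / 2) ≤ r := by rw [hr]; exact le_max_left _ _
      nlinarith
  -- derive the contradiction with minimality
  apply hmin
  refine ⟨r, t • v, hr0, hr1, fun z hz => ?_⟩
  rw [Set.mem_vadd_set_iff_neg_vadd_mem]
  by_contra hzL
  have hrLconv : Convex ℝ (r • L) := hL.2.1.smul r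
  have hrLcomp : IsCompact (r • L) := by
    rw [← Set.image_smul]
    exact hLc.image (continuous_const_smul r)
  obtain ⟨g, u2, hgL, hgz⟩ :=
    geometric_hahn_banach_closed_point hrLconv hrLcomp.isClosed hzL
  set wv : E n := (InnerProductSpace.toDual ℝ (E n)).symm g with hwv
  have hwvz : ∀ z : E n, (inner ℝ wv z : ℝ) = g z := fun z =>
    InnerProductSpace.toDual_symm_apply
  have hwv0 : wv ≠ 0 := by
    intro h
    have h1 : g 0 < u2 := hgL 0 ⟨0, interior_subset h0, by simp⟩
    have h2 : u2 < g (-(t • v) +ᵥ z) := hgz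
    have hg0 : ∀ z : E n, g z = 0 := by
      intro z; rw [← hwvz, h, inner_zero_left]
    rw [map_zero] at h1
    rw [hg0] at h2
    linarith
  set c : ℝ := supp L wv with hc
  have hcpos : 0 < c := by
    have h1 := hsuppL_pos wv hwv0
    have h2 : 0 < ‖wv‖ := norm_pos_iff.2 hwv0
    nlinarith
  set x' : E n := c⁻¹ • wv with hx'
  have hx'C : x' ∈ C := by
    rw [hCeq]
    show supp L (c⁻¹ • wv) = 1
    rw [supp_smul hLc hLne (inv_nonneg.2 hcpos.le), ← hc, inv_mul_cancel₀ hcpos.ne']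
  -- supp L wv ≤ u2 / r
  have hsuppwv : r * c ≤ u2 := by
    have h1 : ∀ y ∈ L, (inner ℝ wv y : ℝ) ≤ u2 / r := by
      intro y hy
      have h2 : g (r • y) < u2 := hgL (r • y) ⟨y, hy, rfl⟩
      rw [← hwvz, real_inner_smul_right] at h2
      rw [le_div_iff₀ hr0, mul_comm]
      exact h2.le
    have := supp_le hLne h1
    rw [← hc] at this
    rw [mul_comm, ← le_div_iff₀ hr0]
    exact this
  have hzK : (inner ℝ x' z : ℝ) ≤ supp K x' := le_supp hKc hz
  have hB := hbound x' hx'C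
  have hfin : (inner ℝ wv (z - t • v) : ℝ) ≤ r * c := by
    have h1 : (inner ℝ x' z : ℝ) - t * (inner ℝ x' v : ℝ) ≤ r := by linarith
    have h2 : (inner ℝ x' (z - t • v) : ℝ) = (inner ℝ x' z : ℝ) - t * (inner ℝ x' v : ℝ) := by
      rw [inner_sub_right, real_inner_smul_right]
    have h3 : (inner ℝ x' (z - t • v) : ℝ) = c⁻¹ * (inner ℝ wv (z - t • v) : ℝ) := by
      rw [hx', real_inner_smul_left]
    rw [h2] at h3
    have h4 : c⁻¹ * (inner ℝ wv (z - t • v) : ℝ) ≤ r := by rw [← h3]; exact h1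
    calc (inner ℝ wv (z - t • v) : ℝ) = c * (c⁻¹ * (inner ℝ wv (z - t • v) : ℝ)) := by
          field_simp
      _ ≤ c * r := mul_le_mul_of_nonneg_left h4 hcpos.le
      _ = r * c := mul_comm _ _
  have hlast : u2 < (inner ℝ wv (z - t • v) : ℝ) := by
    have := hgz
    rw [← hwvz] at this
    have heq : -(t • v) +ᵥ z = z - t • v := by
      rw [vadd_eq_add, neg_add_eq_sub]
    rwa [heq] at this
  linarith

/-- Let `K ⊆ L` be convex bodies in `ℝⁿ` with `0` in the interior of `L`,
such that `K` is not contained in `r • L + v` for any `0 < r < 1` and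
`v ∈ ℝⁿ`. Then `0` lies in the convex hull of `∂K° ∩ ∂L°`. -/
theorem stmt6 (n : ℕ) (K L : Set (E n)) (hK : IsConvexBody K)
    (hL : IsConvexBody L) (hKL : K ⊆ L) (h0 : (0 : E n) ∈ interior L)
    (hmin : ¬ ∃ (r : ℝ) (v : E n), 0 < r ∧ r < 1 ∧ K ⊆ v +ᵥ (r • L)) :
    (0 : E n) ∈ convexHull ℝ (frontier (polarBody K) ∩ frontier (polarBody L)) := by
  exact stmt6_aux n K L hK hL hKL h0 hmin
end
end

section
/- If K ⊆ L are convex bodies in R^n in John's position, then the contact pairs (u_i, v_i)_{i=1}^m can be chosen so that no u_i lies in the convex hull of the other u_j's and no v_i lies in the convex hull of the other v_j's. -/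
open Pointwise

noncomputable section

lemma polarBody_isClosed {n : ℕ} (S : Set (E n)) : IsClosed (polarBody S) := by
  have h : polarBody S = ⋂ y ∈ S, {x : E n | (inner ℝ x y : ℝ) ≤ 1} := by
    ext x; simp [polarBody]
  rw [h]
  exact isClosed_biInter fun y _ => isClosed_le (continuous_id.inner continuous_const) continuous_const

lemma mem_polar_comb {n : ℕ} {S : Set (E n)} {v1 v2 : E n} (h1 : v1 ∈ polarBody S)
    (h2 : v2 ∈ polarBody S) {α β : ℝ} (hα : 0 ≤ α) (hβ : 0 ≤ β) (hs : α + β = 1) :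
    α • v1 + β • v2 ∈ polarBody S := by
  intro y hy
  have e : (inner ℝ (α • v1 + β • v2) y : ℝ) = α * inner ℝ v1 y + β * inner ℝ v2 y := by
    rw [inner_add_left, real_inner_smul_left, real_inner_smul_left]
  rw [e]
  have := h1 y hy
  have := h2 y hy
  nlinarith

lemma not_mem_interior_of_pairing {n : ℕ} {A : Set (E n)} {x y : E n}
    (hpair : ∀ z ∈ A, (inner ℝ z y : ℝ) ≤ 1) (h1 : (inner ℝ x y : ℝ) = 1) :
    x ∉ interior A := by
  intro hx
  have hy : y ≠ 0 := by rintro rfl; simp at h1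
  have hy' : (0:ℝ) < ‖y‖ := norm_pos_iff.mpr hy
  rcases Metric.isOpen_iff.mp isOpen_interior x hx with ⟨ε, hε, hball⟩
  set w := x + (ε / (2 * ‖y‖)) • y with hw
  have hd : dist w x < ε := by
    rw [hw, dist_eq_norm, add_sub_cancel_left, norm_smul, Real.norm_eq_abs,
      abs_of_pos (by positivity)]
    rw [div_mul_eq_mul_div, mul_comm 2 ‖y‖, mul_comm ε ‖y‖, mul_div_mul_left _ _ hy'.ne']
    linarith
  have hwA : w ∈ A := interior_subset (hball hd)
  have hle := hpair w hwA
  have hin : (inner ℝ w y : ℝ) = 1 + (ε / (2 * ‖y‖)) * ‖y‖^2 := by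
    rw [hw, inner_add_left, real_inner_smul_left, h1, real_inner_self_eq_norm_sq]
  rw [hin] at hle
  have : 0 < (ε / (2 * ‖y‖)) * ‖y‖^2 := by positivity
  linarith

lemma exists_index_weights {n m : ℕ} {u : Fin m → E n} {k : Fin m}
    (h : u k ∈ convexHull ℝ (u '' ({k}ᶜ : Set (Fin m)))) :
    ∃ lam : Fin m → ℝ, lam k = 0 ∧ (∀ j, 0 ≤ lam j) ∧ ∑ j, lam j = 1 ∧
      ∑ j, lam j • u j = u k := by
  rw [convexHull_eq] at h
  obtain ⟨ι, t, w, z, hw0, hw1, hz, hc⟩ := h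
  have hch : ∀ i : ι, ∃ j : Fin m, i ∈ t → (j ≠ k ∧ u j = z i) := by
    intro i
    by_cases hi : i ∈ t
    · obtain ⟨j, hj, hju⟩ := hz i hi
      exact ⟨j, fun _ => ⟨hj, hju⟩⟩
    · exact ⟨k, fun hmem => absurd hmem hi⟩
  choose g hg using hch
  refine ⟨fun j => ∑ i ∈ t, if g i = j then w i else 0, ?_, ?_, ?_, ?_⟩
  · exact Finset.sum_eq_zero fun i hi => if_neg (hg i hi).1
  · intro j
    exact Finset.sum_nonneg fun i hi => by split <;> [exact hw0 i hi; exact le_refl 0]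
  · rw [Finset.sum_comm]
    rw [← hw1]
    apply Finset.sum_congr rfl
    intro i hi
    simp [Finset.sum_ite_eq]
  · have : ∀ j : Fin m, (∑ i ∈ t, if g i = j then w i else 0) • u j
        = ∑ i ∈ t, (if g i = j then w i • u j else 0) := by
      intro j
      rw [Finset.sum_smul]
      exact Finset.sum_congr rfl fun i _ => by split <;> simp
    simp_rw [this]
    rw [Finset.sum_comm]
    have : ∀ i ∈ t, (∑ j : Fin m, if g i = j then w i • u j else 0) = w i • z i := by
      intro i hi
      rw [Finset.sum_ite_eq]
      simp [(hg i hi).2]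
    rw [Finset.sum_congr rfl this, ← Finset.centerMass_eq_of_sum_1 _ _ hw1, hc]

lemma step_u {n m : ℕ} {K L : Set (E n)} (hKcl : IsClosed K) (hLcl : IsClosed L)
    {u v : Fin (m+1) → E n} {a : Fin (m+1) → ℝ} (hd : IsJohnData K L u v a)
    {k : Fin (m+1)} {lam : Fin (m+1) → ℝ} (hlk : lam k = 0) (hl0 : ∀ j, 0 ≤ lam j)
    (hls : ∑ j, lam j = 1) (hlu : ∑ j, lam j • u j = u k) :
    ∃ (u' v' : Fin m → E n) (a' : Fin m → ℝ), IsJohnData K L u' v' a' := by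
  obtain ⟨hu, hv, ha, hdec, hsu, hsv, huv⟩ := hd
  have huK : ∀ j, u j ∈ K := fun j => hKcl.frontier_subset (hu j).1
  have huL : ∀ j, u j ∈ L := fun j => hLcl.frontier_subset (hu j).2
  have hvK : ∀ j, v j ∈ polarBody K := fun j => (polarBody_isClosed K).frontier_subset (hv j).1
  have hvL : ∀ j, v j ∈ polarBody L := fun j => (polarBody_isClosed L).frontier_subset (hv j).2
  -- key fact: positive-weight u's pair to 1 with v k
  have hkey : ∀ j, 0 < lam j → (inner ℝ (u j) (v k) : ℝ) = 1 := by
    have h1 : ∑ j, lam j * (inner ℝ (u j) (v k) : ℝ) = 1 := by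
      have h2 := congrArg (fun y => (inner ℝ y (v k) : ℝ)) hlu
      simp only [sum_inner, real_inner_smul_left] at h2
      rw [h2, huv k]
    have hle : ∀ j, (inner ℝ (u j) (v k) : ℝ) ≤ 1 := fun j => by
      rw [real_inner_comm]; exact hvK k _ (huK j)
    have h0 : ∑ j, lam j * (1 - (inner ℝ (u j) (v k) : ℝ)) = 0 := by
      have e : ∀ j ∈ Finset.univ, lam j * (1 - (inner ℝ (u j) (v k) : ℝ))
          = lam j - lam j * (inner ℝ (u j) (v k) : ℝ) := fun j _ => by ring
      rw [Finset.sum_congr rfl e, Finset.sum_sub_distrib, hls, h1, sub_self]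
    intro j hj
    have hz := (Finset.sum_eq_zero_iff_of_nonneg
      (fun j _ => mul_nonneg (hl0 j) (sub_nonneg.mpr (hle j)))).mp h0 j (Finset.mem_univ j)
    rcases mul_eq_zero.mp hz with h | h
    · exact absurd h hj.ne'
    · linarith
  set σ : Fin m → Fin (m+1) := k.succAbove with hσ
  set c : Fin m → ℝ := fun i => lam (σ i) * a k with hc
  set b : Fin m → ℝ := fun i => a (σ i) + c i with hbdef
  have hc0 : ∀ i, 0 ≤ c i := fun i => mul_nonneg (hl0 _) (ha k).le
  have hb : ∀ i, 0 < b i := fun i => add_pos_of_pos_of_nonneg (ha _) (hc0 i)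
  set v' : Fin m → E n := fun i => (b i)⁻¹ • (a (σ i) • v (σ i) + c i • v k) with hv'
  have hbv : ∀ i, b i • v' i = a (σ i) • v (σ i) + c i • v k :=
    fun i => smul_inv_smul₀ (hb i).ne' _
  -- generic splitting of sums over Fin (m+1)
  have hsplit : ∀ f : Fin (m+1) → E n, ∑ i : Fin m, f (σ i) = (∑ j, f j) - f k := by
    intro f; rw [Fin.sum_univ_succAbove f k]; abel
  have hsplitR : ∀ f : Fin (m+1) → ℝ, ∑ i : Fin m, f (σ i) = (∑ j, f j) - f k := by
    intro f; rw [Fin.sum_univ_succAbove f k]; ring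
  have hlusum : ∑ i : Fin m, lam (σ i) • u (σ i) = u k := by
    rw [hsplit (fun j => lam j • u j), hlu, hlk, zero_smul, sub_zero]
  have hlamsum : ∑ i : Fin m, lam (σ i) = 1 := by
    rw [hsplitR lam, hls, hlk, sub_zero]
  -- contact condition
  have hcontact : ∀ i, (inner ℝ (u (σ i)) (v' i) : ℝ) = 1 := by
    intro i
    have h2 : b i * (inner ℝ (u (σ i)) (v' i) : ℝ) = b i * 1 := by
      rw [← real_inner_smul_right, hbv i, inner_add_right, real_inner_smul_right,
        real_inner_smul_right, huv (σ i), mul_one, mul_one]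
      rcases (hl0 (σ i)).lt_or_eq with hpos | hzero
      · rw [hkey (σ i) hpos, mul_one]
      · simp [hc, hbdef, ← hzero]
    exact mul_left_cancel₀ (hb i).ne' h2
  refine ⟨fun i => u (σ i), v', b, ?_, ?_, fun i => hb i, ?_, ?_, ?_, hcontact⟩
  · exact fun i => hu (σ i)
  · -- frontier membership of v'
    intro i
    have hform : v' i = ((b i)⁻¹ * a (σ i)) • v (σ i) + ((b i)⁻¹ * c i) • v k := by
      rw [hv']; simp only [smul_add, smul_smul]
    have hαβ : (b i)⁻¹ * a (σ i) + (b i)⁻¹ * c i = 1 := by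
      rw [← mul_add]; exact inv_mul_cancel₀ (hb i).ne'
    have hα : 0 ≤ (b i)⁻¹ * a (σ i) := mul_nonneg (inv_nonneg.mpr (hb i).le) (ha _).le
    have hβ : 0 ≤ (b i)⁻¹ * c i := mul_nonneg (inv_nonneg.mpr (hb i).le) (hc0 i)
    have hK' : v' i ∈ polarBody K := by
      rw [hform]; exact mem_polar_comb (hvK _) (hvK k) hα hβ hαβ
    have hL' : v' i ∈ polarBody L := by
      rw [hform]; exact mem_polar_comb (hvL _) (hvL k) hα hβ hαβ
    constructor
    · rw [frontier, (polarBody_isClosed K).closure_eq]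
      exact ⟨hK', not_mem_interior_of_pairing (fun z hz => hz _ (huK (σ i)))
        (by rw [real_inner_comm]; exact hcontact i)⟩
    · rw [frontier, (polarBody_isClosed L).closure_eq]
      exact ⟨hL', not_mem_interior_of_pairing (fun z hz => hz _ (huL (σ i)))
        (by rw [real_inner_comm]; exact hcontact i)⟩
  · -- decomposition
    intro x
    have hterm : ∀ i, (b i * (inner ℝ x (v' i) : ℝ)) • u (σ i)
        = (a (σ i) * (inner ℝ x (v (σ i)) : ℝ)) • u (σ i)
          + (a k * (inner ℝ x (v k) : ℝ)) • (lam (σ i) • u (σ i)) := by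
      intro i
      have e : b i * (inner ℝ x (v' i) : ℝ)
          = a (σ i) * (inner ℝ x (v (σ i)) : ℝ) + c i * (inner ℝ x (v k) : ℝ) := by
        rw [← real_inner_smul_right, hbv i, inner_add_right, real_inner_smul_right,
          real_inner_smul_right]
      rw [e, add_smul, smul_smul]
      congr 2
      rw [hc]; ring
    rw [Finset.sum_congr rfl (fun i _ => hterm i), Finset.sum_add_distrib,
      hsplit (fun j => (a j * (inner ℝ x (v j) : ℝ)) • u j), ← Finset.smul_sum, hlusum,
      ← hdec x]
    abel
  · -- sum b u' = 0
    have hterm : ∀ i, b i • u (σ i) = a (σ i) • u (σ i) + a k • (lam (σ i) • u (σ i)) := by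
      intro i
      rw [hbdef, hc, add_smul, smul_smul]
      congr 2
      ring
    rw [Finset.sum_congr rfl (fun i _ => hterm i), Finset.sum_add_distrib,
      hsplit (fun j => a j • u j), hsu, ← Finset.smul_sum, hlusum]
    abel
  · -- sum b v' = 0
    rw [Finset.sum_congr rfl (fun i _ => hbv i), Finset.sum_add_distrib,
      hsplit (fun j => a j • v j), hsv]
    have : ∑ i : Fin m, c i • v k = a k • v k := by
      rw [← Finset.sum_smul]
      congr 1
      rw [hc]
      rw [← Finset.sum_mul, hlamsum, one_mul]
    rw [this]
    abel

lemma step_v {n m : ℕ} {K L : Set (E n)} (hKcl : IsClosed K) (hLcl : IsClosed L)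
    (hKco : Convex ℝ K) (hLco : Convex ℝ L)
    {u v : Fin (m+1) → E n} {a : Fin (m+1) → ℝ} (hd : IsJohnData K L u v a)
    {k : Fin (m+1)} {lam : Fin (m+1) → ℝ} (hlk : lam k = 0) (hl0 : ∀ j, 0 ≤ lam j)
    (hls : ∑ j, lam j = 1) (hlv : ∑ j, lam j • v j = v k) :
    ∃ (u' v' : Fin m → E n) (a' : Fin m → ℝ), IsJohnData K L u' v' a' := by
  obtain ⟨hu, hv, ha, hdec, hsu, hsv, huv⟩ := hd
  have huK : ∀ j, u j ∈ K := fun j => hKcl.frontier_subset (hu j).1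
  have huL : ∀ j, u j ∈ L := fun j => hLcl.frontier_subset (hu j).2
  have hvK : ∀ j, v j ∈ polarBody K := fun j => (polarBody_isClosed K).frontier_subset (hv j).1
  have hvL : ∀ j, v j ∈ polarBody L := fun j => (polarBody_isClosed L).frontier_subset (hv j).2
  -- key fact: positive-weight v's pair to 1 with u k
  have hkey : ∀ j, 0 < lam j → (inner ℝ (u k) (v j) : ℝ) = 1 := by
    have h1 : ∑ j, lam j * (inner ℝ (u k) (v j) : ℝ) = 1 := by
      have h2 := congrArg (fun y => (inner ℝ (u k) y : ℝ)) hlv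
      simp only [inner_sum, real_inner_smul_right] at h2
      rw [h2, huv k]
    have hle : ∀ j, (inner ℝ (u k) (v j) : ℝ) ≤ 1 := fun j => by
      rw [real_inner_comm]; exact hvK j _ (huK k)
    have h0 : ∑ j, lam j * (1 - (inner ℝ (u k) (v j) : ℝ)) = 0 := by
      have e : ∀ j ∈ Finset.univ, lam j * (1 - (inner ℝ (u k) (v j) : ℝ))
          = lam j - lam j * (inner ℝ (u k) (v j) : ℝ) := fun j _ => by ring
      rw [Finset.sum_congr rfl e, Finset.sum_sub_distrib, hls, h1, sub_self]
    intro j hj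
    have hz := (Finset.sum_eq_zero_iff_of_nonneg
      (fun j _ => mul_nonneg (hl0 j) (sub_nonneg.mpr (hle j)))).mp h0 j (Finset.mem_univ j)
    rcases mul_eq_zero.mp hz with h | h
    · exact absurd h hj.ne'
    · linarith
  set σ : Fin m → Fin (m+1) := k.succAbove with hσ
  set c : Fin m → ℝ := fun i => lam (σ i) * a k with hc
  set b : Fin m → ℝ := fun i => a (σ i) + c i with hbdef
  have hc0 : ∀ i, 0 ≤ c i := fun i => mul_nonneg (hl0 _) (ha k).le
  have hb : ∀ i, 0 < b i := fun i => add_pos_of_pos_of_nonneg (ha _) (hc0 i)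
  set u' : Fin m → E n := fun i => (b i)⁻¹ • (a (σ i) • u (σ i) + c i • u k) with hu'
  have hbu : ∀ i, b i • u' i = a (σ i) • u (σ i) + c i • u k :=
    fun i => smul_inv_smul₀ (hb i).ne' _
  have hsplit : ∀ f : Fin (m+1) → E n, ∑ i : Fin m, f (σ i) = (∑ j, f j) - f k := by
    intro f; rw [Fin.sum_univ_succAbove f k]; abel
  have hsplitR : ∀ f : Fin (m+1) → ℝ, ∑ i : Fin m, f (σ i) = (∑ j, f j) - f k := by
    intro f; rw [Fin.sum_univ_succAbove f k]; ring
  have hlvsum : ∑ i : Fin m, lam (σ i) • v (σ i) = v k := by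
    rw [hsplit (fun j => lam j • v j), hlv, hlk, zero_smul, sub_zero]
  have hlamsum : ∑ i : Fin m, lam (σ i) = 1 := by
    rw [hsplitR lam, hls, hlk, sub_zero]
  -- contact condition
  have hcontact : ∀ i, (inner ℝ (u' i) (v (σ i)) : ℝ) = 1 := by
    intro i
    have h2 : b i * (inner ℝ (u' i) (v (σ i)) : ℝ) = b i * 1 := by
      rw [← real_inner_smul_left, hbu i, inner_add_left, real_inner_smul_left,
        real_inner_smul_left, huv (σ i), mul_one, mul_one]
      rcases (hl0 (σ i)).lt_or_eq with hpos | hzero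
      · rw [hkey (σ i) hpos, mul_one]
      · simp [hc, hbdef, ← hzero]
    exact mul_left_cancel₀ (hb i).ne' h2
  refine ⟨u', fun i => v (σ i), b, ?_, ?_, fun i => hb i, ?_, ?_, ?_, hcontact⟩
  · -- frontier membership of u'
    intro i
    have hform : u' i = ((b i)⁻¹ * a (σ i)) • u (σ i) + ((b i)⁻¹ * c i) • u k := by
      rw [hu']; simp only [smul_add, smul_smul]
    have hαβ : (b i)⁻¹ * a (σ i) + (b i)⁻¹ * c i = 1 := by
      rw [← mul_add]; exact inv_mul_cancel₀ (hb i).ne'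
    have hα : 0 ≤ (b i)⁻¹ * a (σ i) := mul_nonneg (inv_nonneg.mpr (hb i).le) (ha _).le
    have hβ : 0 ≤ (b i)⁻¹ * c i := mul_nonneg (inv_nonneg.mpr (hb i).le) (hc0 i)
    have hK' : u' i ∈ K := by
      rw [hform]; exact hKco (huK (σ i)) (huK k) hα hβ hαβ
    have hL' : u' i ∈ L := by
      rw [hform]; exact hLco (huL (σ i)) (huL k) hα hβ hαβ
    constructor
    · rw [frontier, hKcl.closure_eq]
      refine ⟨hK', not_mem_interior_of_pairing (y := v (σ i)) ?_ (hcontact i)⟩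
      intro z hz
      rw [real_inner_comm]; exact hvK (σ i) z hz
    · rw [frontier, hLcl.closure_eq]
      refine ⟨hL', not_mem_interior_of_pairing (y := v (σ i)) ?_ (hcontact i)⟩
      intro z hz
      rw [real_inner_comm]; exact hvL (σ i) z hz
  · exact fun i => hv (σ i)
  · -- decomposition
    intro x
    have hterm : ∀ i, (b i * (inner ℝ x (v (σ i)) : ℝ)) • u' i
        = (a (σ i) * (inner ℝ x (v (σ i)) : ℝ)) • u (σ i)
          + (a k * (lam (σ i) * (inner ℝ x (v (σ i)) : ℝ))) • u k := by
      intro i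
      have e : (b i * (inner ℝ x (v (σ i)) : ℝ)) • u' i
          = (inner ℝ x (v (σ i)) : ℝ) • (b i • u' i) := by
        rw [mul_comm (b i), ← smul_smul]
      rw [e, hbu i, smul_add, smul_smul, smul_smul]
      congr 2
      · ring
      · rw [hc]; ring
    rw [Finset.sum_congr rfl (fun i _ => hterm i), Finset.sum_add_distrib,
      hsplit (fun j => (a j * (inner ℝ x (v j) : ℝ)) • u j)]
    have e2 : ∑ i : Fin m, (a k * (lam (σ i) * (inner ℝ x (v (σ i)) : ℝ))) • u k
        = (a k * (inner ℝ x (v k) : ℝ)) • u k := by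
      rw [← Finset.sum_smul]
      congr 1
      rw [← Finset.mul_sum]
      congr 1
      have : ∑ i : Fin m, lam (σ i) * (inner ℝ x (v (σ i)) : ℝ)
          = (inner ℝ x (∑ i : Fin m, lam (σ i) • v (σ i)) : ℝ) := by
        rw [inner_sum]
        exact Finset.sum_congr rfl fun i _ => (real_inner_smul_right _ _ _).symm
      rw [this, hlvsum]
    rw [e2, ← hdec x]
    abel
  · -- sum b u' = 0
    rw [Finset.sum_congr rfl (fun i _ => hbu i), Finset.sum_add_distrib,
      hsplit (fun j => a j • u j), hsu]
    have : ∑ i : Fin m, c i • u k = a k • u k := by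
      rw [← Finset.sum_smul]
      congr 1
      rw [hc, ← Finset.sum_mul, hlamsum, one_mul]
    rw [this]
    abel
  · -- sum b v' = 0
    have hterm : ∀ i, b i • v (σ i) = a (σ i) • v (σ i) + a k • (lam (σ i) • v (σ i)) := by
      intro i
      rw [hbdef, hc, add_smul, smul_smul]
      congr 2
      ring
    rw [Finset.sum_congr rfl (fun i _ => hterm i), Finset.sum_add_distrib,
      hsplit (fun j => a j • v j), hsv, ← Finset.smul_sum, hlvsum]
    abel

lemma key {n : ℕ} {K L : Set (E n)} (hKcl : IsClosed K) (hKco : Convex ℝ K)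
    (hLcl : IsClosed L) (hLco : Convex ℝ L) :
    ∀ m : ℕ, ∀ (u v : Fin m → E n) (a : Fin m → ℝ), 0 < m → IsJohnData K L u v a →
    ∃ (m' : ℕ), 0 < m' ∧ ∃ (u' v' : Fin m' → E n) (a' : Fin m' → ℝ),
      IsJohnData K L u' v' a' ∧ (∀ i, u' i ∉ convexHull ℝ (u' '' {i}ᶜ)) ∧
      (∀ i, v' i ∉ convexHull ℝ (v' '' {i}ᶜ)) := by
  intro m
  induction m using Nat.strong_induction_on with
  | _ m ih =>
    intro u v a hm hd
    by_cases h1 : ∃ k, u k ∈ convexHull ℝ (u '' ({k}ᶜ : Set (Fin m)))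
    · obtain ⟨k, hk⟩ := h1
      obtain ⟨lam, hlk, hl0, hls, hlu⟩ := exists_index_weights hk
      obtain ⟨m0, rfl⟩ : ∃ m0, m = m0 + 1 := ⟨m - 1, (Nat.succ_pred_eq_of_pos hm).symm⟩
      obtain ⟨j, hjne⟩ : ∃ j, lam j ≠ 0 := by
        by_contra hno
        push_neg at hno
        rw [Finset.sum_eq_zero (fun j _ => hno j)] at hls
        exact zero_ne_one hls
      have hjk : j ≠ k := fun h => hjne (h ▸ hlk)
      have hm0 : 0 < m0 := by
        rcases Nat.eq_zero_or_pos m0 with h0 | h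
        · exfalso
          apply hjk
          subst h0
          have h1 := j.isLt
          have h2 := k.isLt
          exact Fin.ext (by omega)
        · exact h
      obtain ⟨u', v', a', hd'⟩ := step_u hKcl hLcl hd hlk hl0 hls hlu
      exact ih m0 (Nat.lt_succ_self m0) u' v' a' hm0 hd'
    · by_cases h2 : ∃ k, v k ∈ convexHull ℝ (v '' ({k}ᶜ : Set (Fin m)))
      · obtain ⟨k, hk⟩ := h2
        obtain ⟨lam, hlk, hl0, hls, hlv⟩ := exists_index_weights hk
        obtain ⟨m0, rfl⟩ : ∃ m0, m = m0 + 1 := ⟨m - 1, (Nat.succ_pred_eq_of_pos hm).symm⟩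
        obtain ⟨j, hjne⟩ : ∃ j, lam j ≠ 0 := by
          by_contra hno
          push_neg at hno
          rw [Finset.sum_eq_zero (fun j _ => hno j)] at hls
          exact zero_ne_one hls
        have hjk : j ≠ k := fun h => hjne (h ▸ hlk)
        have hm0 : 0 < m0 := by
          rcases Nat.eq_zero_or_pos m0 with h0 | h
          · exfalso
            apply hjk
            subst h0
            have h1 := j.isLt
            have h2 := k.isLt
            exact Fin.ext (by omega)
          · exact h
        obtain ⟨u', v', a', hd'⟩ := step_v hKcl hLcl hKco hLco hd hlk hl0 hls hlv
        exact ih m0 (Nat.lt_succ_self m0) u' v' a' hm0 hd'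
      · push_neg at h1 h2
        exact ⟨m, hm, u, v, a, hd, h1, h2⟩

/-- If `K ⊆ L` are convex bodies in `ℝⁿ` in John's position, then the contact
pairs `(u i, v i)` can be chosen so that no `u i` lies in the convex hull of
the other `u j`'s and no `v i` lies in the convex hull of the other
`v j`'s. -/
theorem stmt7 (n : ℕ) (K L : Set (E n)) (hK : IsConvexBody K)
    (hL : IsConvexBody L) (hJ : IsJohnPosition K L) :
    ∃ (m : ℕ), 0 < m ∧ ∃ (u v : Fin m → E n) (a : Fin m → ℝ),
      IsJohnData K L u v a ∧
      (∀ i, u i ∉ convexHull ℝ (u '' {i}ᶜ)) ∧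
      (∀ i, v i ∉ convexHull ℝ (v '' {i}ᶜ)) := by
  obtain ⟨-, m, hm, u, v, a, hd⟩ := hJ
  exact key hK.1.isClosed hK.2.1 hL.1.isClosed hL.2.1 m u v a hm hd
end
end

section
/- For any symmetric convex body L in R^n and any simplex S in R^n, the Banach-Mazur distance satisfies d(L, S) = n. -/
open Pointwise

noncomputable section

namespace BMaux
open Matrix


variable {n : ℕ}


/-- Affine map to ℝ in terms of linear part. -/
lemma affine_eval (f : E n →ᵃ[ℝ] ℝ) (x : E n) : f x = f.linear x + f 0 := by
  conv_lhs => rw [show x = x +ᵥ (0 : E n) by simp]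
  rw [f.map_vadd]
  rfl

lemma affInd_iff_sums {m : ℕ} (p : Fin m → E n) :
    AffineIndependent ℝ p ↔
      ∀ w : Fin m → ℝ, ∑ i, w i = 0 → ∑ i, w i • p i = 0 → ∀ i, w i = 0 := by
  rw [affineIndependent_iff_of_fintype]
  refine forall_congr' fun w => ?_
  constructor
  · intro h hw hs
    exact h hw (by rw [Finset.weightedVSub_eq_linear_combination _ hw]; exact hs)
  · intro h hw hs
    exact h hw (by rw [← Finset.weightedVSub_eq_linear_combination _ hw]; exact hs)

lemma linind_diffs {m : ℕ} {p : Fin (m + 1) → E n} (hp : AffineIndependent ℝ p) :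
    LinearIndependent ℝ (fun i : Fin m => p i.succ - p 0) := by
  rw [Fintype.linearIndependent_iff]
  intro c hc
  set w : Fin (m + 1) → ℝ := Fin.cases (-(∑ i, c i)) c with hwdef
  have hw0 : w 0 = -(∑ i, c i) := rfl
  have hws : ∀ i : Fin m, w i.succ = c i := fun i => by simp [hwdef]
  have hsum : ∑ j, w j = 0 := by
    rw [Fin.sum_univ_succ, hw0]
    simp only [hws]
    ring
  have hsum2 : ∑ j, w j • p j = 0 := by
    rw [Fin.sum_univ_succ, hw0]
    simp only [hws]
    have : ∑ i : Fin m, c i • p i.succ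
        = ∑ i : Fin m, (c i • (p i.succ - p 0) + c i • p 0) := by
      refine Finset.sum_congr rfl fun i _ => ?_
      rw [smul_sub]; abel
    rw [this, Finset.sum_add_distrib, hc, ← Finset.sum_smul]
    simp [smul_smul]
  intro i
  have := (affInd_iff_sums p).1 hp w hsum hsum2 i.succ
  rwa [hws] at this

lemma coord_nonneg {m : ℕ} (b : AffineBasis (Fin m) ℝ (E n)) {x : E n}
    (hx : x ∈ convexHull ℝ (Set.range ⇑b)) (j : Fin m) : 0 ≤ b.coord j x := by
  have hconv : Convex ℝ {y : E n | 0 ≤ b.coord j y} := by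
    have := (convex_Ici (0 : ℝ)).affine_preimage (b.coord j)
    exact this
  have hsub : Set.range ⇑b ⊆ {y : E n | 0 ≤ b.coord j y} := by
    rintro _ ⟨i, rfl⟩
    simp only [Set.mem_setOf_eq, AffineBasis.coord_apply]
    split <;> norm_num
  exact convexHull_min hsub hconv hx


lemma sum_smul_coord {m : ℕ} (w : Fin m → ℝ) (v : Fin m → E n) (k : Fin n) :
    (∑ i, w i • v i) k = ∑ i, w i * (v i) k := by
  have : (∑ i, w i • v i) k = EuclideanSpace.proj k (∑ i, w i • v i) := rfl
  rw [this, map_sum]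
  refine Finset.sum_congr rfl fun i _ => ?_
  simp [smul_eq_mul]

def sn (v : E n) : Fin (n + 1) → ℝ := Fin.snoc (fun k => v k) 1

def mat (v : Fin (n + 1) → E n) : Matrix (Fin (n + 1)) (Fin (n + 1)) ℝ :=
  Matrix.of fun i k => sn (v i) k

def D (v : Fin (n + 1) → E n) : ℝ := (mat v).det

lemma contD : Continuous (D (n := n)) := by
  apply Continuous.matrix_det
  apply continuous_matrix
  intro i k
  refine Fin.lastCases ?_ ?_ k
  · simpa [mat, sn] using continuous_const
  · intro k'
    simp only [mat, sn, Matrix.of_apply, Fin.snoc_castSucc]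
    exact (EuclideanSpace.proj k').continuous.comp (continuous_apply i)

lemma vecMul_eq (v : Fin (n + 1) → E n) (w : Fin (n + 1) → ℝ) :
    w ᵥ* mat v = ∑ i, w i • sn (v i) := by
  funext k
  simp [Matrix.vecMul, dotProduct, mat, Finset.sum_apply]

lemma sum_sn_eq_zero_iff (v : Fin (n + 1) → E n) (w : Fin (n + 1) → ℝ) :
    (∑ i, w i • sn (v i)) = 0 ↔ (∑ i, w i = 0 ∧ ∑ i, w i • v i = 0) := by
  constructor
  · intro h
    have hlast := congrFun h (Fin.last n)
    simp only [Finset.sum_apply, Pi.smul_apply, sn, Fin.snoc_last, smul_eq_mul, mul_one,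
      Pi.zero_apply] at hlast
    refine ⟨hlast, ?_⟩
    ext k
    have h2 := congrFun h (Fin.castSucc k)
    simp only [Finset.sum_apply, Pi.smul_apply, sn, Fin.snoc_castSucc, smul_eq_mul,
      Pi.zero_apply] at h2
    rw [sum_smul_coord]
    simpa using h2
  · rintro ⟨h1, h2⟩
    funext k
    refine Fin.lastCases ?_ ?_ k
    · simpa [Finset.sum_apply, sn, Fin.snoc_last] using h1
    · intro k'
      have : (∑ i, w i • v i) k' = (0 : E n) k' := congrArg (fun (y : E n) => y k') h2
      rw [sum_smul_coord] at this
      simpa [Finset.sum_apply, sn, Fin.snoc_castSucc] using this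

lemma D_eq_zero_iff (v : Fin (n + 1) → E n) :
    D v = 0 ↔ ¬ AffineIndependent ℝ v := by
  rw [show D v = (mat v).det from rfl, ← Matrix.exists_vecMul_eq_zero_iff (M := mat v)]
  rw [affineIndependent_iff_of_fintype]
  constructor
  · rintro ⟨w, hw, hmul⟩ hcon
    rw [vecMul_eq, sum_sn_eq_zero_iff] at hmul
    apply hw
    funext i
    exact hcon w hmul.1 (by rw [Finset.weightedVSub_eq_linear_combination _ hmul.1]; exact hmul.2) i
  · intro hcon
    rw [Classical.not_forall] at hcon
    obtain ⟨w, hw⟩ := hcon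
    rw [Classical.not_imp, Classical.not_imp] at hw
    obtain ⟨h1, h2, h3⟩ := hw
    refine ⟨w, ?_, ?_⟩
    · intro h0; apply h3; intro i; rw [h0]; rfl
    · rw [vecMul_eq, sum_sn_eq_zero_iff]
      exact ⟨h1, by rw [← Finset.weightedVSub_eq_linear_combination _ h1]; exact h2⟩


def snlin : E n →ₗ[ℝ] (Fin (n + 1) → ℝ) where
  toFun x := Fin.snoc (fun k => x k) 0
  map_add' x y := by
    funext k
    refine Fin.lastCases ?_ ?_ k
    · simp [Fin.snoc_last]
    · intro k'
      simp [Fin.snoc_castSucc, PiLp.add_apply]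
  map_smul' c x := by
    funext k
    refine Fin.lastCases ?_ ?_ k
    · simp [Fin.snoc_last]
    · intro k'
      simp [Fin.snoc_castSucc, PiLp.smul_apply]

def snaff : E n →ᵃ[ℝ] (Fin (n + 1) → ℝ) where
  toFun := sn
  linear := snlin
  map_vadd' p v := by
    funext k
    refine Fin.lastCases ?_ ?_ k
    · simp [sn, snlin, Fin.snoc_last]
    · intro k'
      simp [sn, snlin, Fin.snoc_castSucc, PiLp.add_apply]

lemma mat_update (v : Fin (n + 1) → E n) (j : Fin (n + 1)) (x : E n) :
    mat (Function.update v j x) = (mat v).updateRow j (sn x) := by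
  ext i k
  by_cases h : i = j
  · subst h; simp [mat, Matrix.updateRow_apply, Function.update_self]
  · simp [mat, Matrix.updateRow_apply, h, Function.update_of_ne h]

def detRow (v : Fin (n + 1) → E n) (j : Fin (n + 1)) : (Fin (n + 1) → ℝ) →ₗ[ℝ] ℝ where
  toFun row := ((mat v).updateRow j row).det
  map_add' x y := Matrix.det_updateRow_add (mat v) j x y
  map_smul' c x := Matrix.det_updateRow_smul (mat v) j c x

lemma D_update (v : Fin (n + 1) → E n) (b : AffineBasis (Fin (n + 1)) ℝ (E n))
    (hb : ⇑b = v) (j : Fin (n + 1)) (x : E n) :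
    D (Function.update v j x) = b.coord j x * D v := by
  have key : ∀ y : E n, D (Function.update v j y)
      = ((detRow v j).toAffineMap.comp snaff) y := by
    intro y
    show (mat (Function.update v j y)).det = ((mat v).updateRow j (sn y)).det
    rw [mat_update]
  set F : E n →ᵃ[ℝ] ℝ := (detRow v j).toAffineMap.comp snaff with hF
  have hsum1 : ∑ i, b.coord i x = 1 := b.sum_coord_apply_eq_one x
  have hself : (Finset.univ.affineCombination ℝ v fun i => b.coord i x) = x := by
    rw [← hb]; exact b.affineCombination_coord_eq_self x
  have hFx : F x = ∑ i, b.coord i x • F (v i) := by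
    conv_lhs => rw [← hself]
    rw [Finset.map_affineCombination _ _ _ hsum1,
      Finset.affineCombination_eq_linear_combination _ _ _ hsum1]
    rfl
  have hFv : ∀ i, F (v i) = if i = j then D v else 0 := by
    intro i
    rw [← key]
    by_cases h : i = j
    · subst h; rw [Function.update_eq_self]; simp
    · simp only [h, if_false]
      apply Matrix.det_zero_of_row_eq h
      show sn (Function.update v j (v i) i) = sn (Function.update v j (v i) j)
      rw [Function.update_of_ne h, Function.update_self]
    --
  rw [key, hFx]
  simp only [hFv, smul_eq_mul, mul_ite, mul_zero]
  simp [Finset.sum_ite_eq']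


lemma exists_ball (L : Set (E n)) (h : (interior L).Nonempty) :
    ∃ (x0 : E n) (ε : ℝ), 0 < ε ∧ Metric.ball x0 ε ⊆ L := by
  obtain ⟨x0, hx0⟩ := h
  obtain ⟨ε, hε, hball⟩ := Metric.isOpen_iff.1 isOpen_interior x0 hx0
  exact ⟨x0, ε, hε, hball.trans interior_subset⟩

lemma exists_affInd_in (L : Set (E n)) (h : (interior L).Nonempty) :
    ∃ v : Fin (n + 1) → E n, (∀ i, v i ∈ L) ∧ AffineIndependent ℝ v := by
  obtain ⟨x0, ε, hε, hball⟩ := exists_ball L h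
  refine ⟨Fin.cons x0 (fun i => x0 + (ε / 2) • EuclideanSpace.single i 1), ?_, ?_⟩
  · intro i
    refine Fin.cases ?_ ?_ i
    · exact hball (by simp [hε])
    · intro i'
      apply hball
      simp only [Metric.mem_ball, dist_eq_norm, Fin.cons_succ]
      rw [show x0 + (ε / 2) • EuclideanSpace.single i' 1 - x0
        = (ε / 2) • EuclideanSpace.single i' (1:ℝ) by abel]
      rw [norm_smul, EuclideanSpace.norm_single]
      simp [abs_of_pos hε]
      linarith
  · rw [affInd_iff_sums]
    intro w hw0 hws
    have hsucc : ∀ k : Fin n, w k.succ = 0 := by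
      intro k
      rw [Fin.sum_univ_succ] at hws hw0
      simp only [Fin.cons_zero, Fin.cons_succ] at hws
      have hre : ∑ i : Fin n, w i.succ • (x0 + (ε / 2) • EuclideanSpace.single i (1:ℝ))
          = (∑ i : Fin n, w i.succ) • x0
            + (ε/2) • ∑ i : Fin n, w i.succ • EuclideanSpace.single i (1:ℝ) := by
        rw [Finset.smul_sum, Finset.sum_smul, ← Finset.sum_add_distrib]
        refine Finset.sum_congr rfl fun i _ => ?_
        rw [smul_add, smul_smul, smul_smul, mul_comm]
      rw [hre] at hws
      have hw0' : (∑ i : Fin n, w i.succ) = - w 0 := by linarith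
      rw [hw0'] at hws
      have hzero : ∑ i : Fin n, w i.succ • EuclideanSpace.single i (1:ℝ) = 0 := by
        have h2 : (ε/2) • ∑ i : Fin n, w i.succ • EuclideanSpace.single i (1:ℝ) = 0 := by
          rw [← hws]; module
        have := smul_eq_zero.1 h2
        rcases this with h | h
        · exfalso; linarith [h]
        · exact h
      have hco : (∑ i : Fin n, w i.succ • EuclideanSpace.single i (1:ℝ)) k = (0 : E n) k :=
        congrArg (fun y : E n => y k) hzero
      rw [sum_smul_coord] at hco
      simpa [EuclideanSpace.single_apply] using hco
    intro i
    refine Fin.cases ?_ (fun k => hsucc k) i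
    rw [Fin.sum_univ_succ] at hw0
    simp only [hsucc] at hw0
    simpa using hw0

lemma exists_contact_basis (L : Set (E n)) (hcomp : IsCompact L) (hint : (interior L).Nonempty) :
    ∃ b : AffineBasis (Fin (n + 1)) ℝ (E n),
      (∀ i, b i ∈ L) ∧ ∀ x ∈ L, ∀ j, |b.coord j x| ≤ 1 := by
  classical
  set P : Set (Fin (n + 1) → E n) := Set.pi Set.univ (fun _ => L) with hP
  have hPc : IsCompact P := isCompact_univ_pi (fun _ => hcomp)
  obtain ⟨v1, hv1L, hv1ind⟩ := exists_affInd_in L hint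
  have hv1P : v1 ∈ P := fun i _ => hv1L i
  obtain ⟨v, hvP, hvmax⟩ := hPc.exists_isMaxOn ⟨v1, hv1P⟩
    ((continuous_abs.comp contD).continuousOn)
  have hmax : ∀ y ∈ P, |D y| ≤ |D v| := hvmax
  have hDne : D v ≠ 0 := by
    intro h0
    have h1 : D v1 ≠ 0 := fun hc => (D_eq_zero_iff v1).1 hc hv1ind
    have := hmax v1 hv1P
    rw [h0] at this
    simp at this
    exact h1 (by simpa using this)
  have hind : AffineIndependent ℝ v := by
    by_contra hc
    exact hDne ((D_eq_zero_iff v).2 hc)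
  have htot : affineSpan ℝ (Set.range v) = ⊤ := by
    rw [hind.affineSpan_eq_top_iff_card_eq_finrank_add_one]
    simp [finrank_euclideanSpace_fin]
  refine ⟨⟨v, hind, htot⟩, fun i => hvP i (Set.mem_univ i), ?_⟩
  intro x hx j
  set b : AffineBasis (Fin (n + 1)) ℝ (E n) := ⟨v, hind, htot⟩ with hbdef
  have hb : ⇑b = v := rfl
  have hup : Function.update v j x ∈ P := by
    intro i _
    by_cases h : i = j
    · subst h; rw [Function.update_self]; exact hx
    · rw [Function.update_of_ne h]; exact hvP i (Set.mem_univ i)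
  have := hmax _ hup
  rw [D_update v b hb j x, abs_mul] at this
  have hpos : 0 < |D v| := abs_pos.2 hDne
  refine (mul_le_mul_iff_left₀ hpos).1 ?_
  rw [one_mul]
  exact this


lemma image_vadd_hull (T : E n ≃ₗ[ℝ] E n) (v : E n) (p : Fin (n + 1) → E n) :
    (T : E n →ₗ[ℝ] E n) '' (v +ᵥ convexHull ℝ (Set.range p))
      = convexHull ℝ (Set.range fun j => T (v + p j)) := by
  have h1 : v +ᵥ convexHull ℝ (Set.range p) = convexHull ℝ (Set.range fun j => v + p j) := by
    rw [← convexHull_vadd]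
    congr 1
    ext y
    constructor
    · rintro ⟨z, ⟨j, rfl⟩, rfl⟩
      exact ⟨j, rfl⟩
    · rintro ⟨j, rfl⟩
      exact ⟨p j, ⟨j, rfl⟩, rfl⟩
  rw [h1]
  have h2 : (⇑(T : E n →ₗ[ℝ] E n)) '' (convexHull ℝ (Set.range fun j => v + p j))
      = ⇑(T.toLinearMap.toAffineMap) '' (convexHull ℝ (Set.range fun j => v + p j)) := rfl
  rw [h2, (T.toLinearMap.toAffineMap).image_convexHull]
  congr 1
  rw [← Set.range_comp]
  rfl

lemma exists_image_eq (hn : 0 < n) (p w : Fin (n + 1) → E n)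
    (hp : AffineIndependent ℝ p)
    (hw : LinearIndependent ℝ (fun i : Fin n => w i.succ - w 0)) :
    ∃ (T : E n ≃ₗ[ℝ] E n) (v : E n),
      (T : E n →ₗ[ℝ] E n) '' (v +ᵥ convexHull ℝ (Set.range p))
        = convexHull ℝ (Set.range w) := by
  have : Nonempty (Fin n) := ⟨⟨0, hn⟩⟩
  have hcard : Fintype.card (Fin n) = Module.finrank ℝ (E n) := by
    simp [finrank_euclideanSpace_fin]
  set bp := basisOfLinearIndependentOfCardEqFinrank (linind_diffs hp) hcard with hbp
  set bw := basisOfLinearIndependentOfCardEqFinrank hw hcard with hbw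
  set T := bp.equiv bw (Equiv.refl _) with hT
  have hTgen : ∀ i : Fin n, T (p i.succ - p 0) = w i.succ - w 0 := by
    intro i
    have h1 : bp i = p i.succ - p 0 := by
      rw [hbp, coe_basisOfLinearIndependentOfCardEqFinrank]
    have h2 : bw i = w i.succ - w 0 := by
      rw [hbw, coe_basisOfLinearIndependentOfCardEqFinrank]
    rw [← h1, ← h2, hT]
    simp [Module.Basis.equiv_apply]
  refine ⟨T, T.symm (w 0) - p 0, ?_⟩
  rw [image_vadd_hull]
  congr 1
  have hvj : ∀ j, T (T.symm (w 0) - p 0 + p j) = w j := by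
    intro j
    refine Fin.cases ?_ ?_ j
    · rw [show T.symm (w 0) - p 0 + p 0 = T.symm (w 0) by abel]
      exact T.apply_symm_apply (w 0)
    · intro i
      rw [show T.symm (w 0) - p 0 + p i.succ = T.symm (w 0) + (p i.succ - p 0) by abel,
        map_add, T.apply_symm_apply, hTgen]
      abel
  rw [show (fun j => T (T.symm (w 0) - p 0 + p j)) = w from funext hvj]


lemma center_mem {L : Set (E n)} (hconv : Convex ℝ L) (hne : L.Nonempty) {c : E n}
    (hsymc : ∀ x, x ∈ L ↔ (2 : ℝ) • c - x ∈ L) : c ∈ L := by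
  obtain ⟨x, hx⟩ := hne
  have hx2 : (2 : ℝ) • c - x ∈ L := (hsymc x).1 hx
  have := hconv hx hx2 (by norm_num : (0:ℝ) ≤ 1/2) (by norm_num : (0:ℝ) ≤ 1/2)
    (by norm_num : (1:ℝ)/2 + 1/2 = 1)
  convert this using 1
  module

lemma affine_two_smul_sub (f : E n →ᵃ[ℝ] ℝ) (c x : E n) :
    f ((2 : ℝ) • c - x) = 2 * f c - f x := by
  rw [affine_eval f ((2 : ℝ) • c - x), affine_eval f c, affine_eval f x, f.linear.map_sub, f.linear.map_smul]
  simp only [smul_eq_mul]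
  ring

lemma affine_inv_smul (f : E n →ᵃ[ℝ] ℝ) (r : ℝ) (q : E n) :
    f (r⁻¹ • q) = r⁻¹ * f q + (1 - r⁻¹) * f 0 := by
  rw [affine_eval f (r⁻¹ • q), affine_eval f q, f.linear.map_smul]
  simp only [smul_eq_mul]
  ring

lemma upper_witness (hn : 2 ≤ n) (L : Set (E n)) (hcomp : IsCompact L) (hconv : Convex ℝ L)
    (hint : (interior L).Nonempty) (c : E n) (hsymc : ∀ x, x ∈ L ↔ (2 : ℝ) • c - x ∈ L)
    (p : Fin (n + 1) → E n) (hp : AffineIndependent ℝ p) :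
    ∃ (T : E n ≃ₗ[ℝ] E n) (u v : E n),
      (u +ᵥ L) ⊆ (T : E n →ₗ[ℝ] E n) '' (v +ᵥ convexHull ℝ (Set.range p)) ∧
      (T : E n →ₗ[ℝ] E n) '' (v +ᵥ convexHull ℝ (Set.range p)) ⊆ (n : ℝ) • (u +ᵥ L) := by
  obtain ⟨b, hbL, hbnd⟩ := exists_contact_basis L hcomp hint
  have hn0 : (0 : ℝ) < n := by
    have : (2 : ℝ) ≤ n := by exact_mod_cast hn
    linarith
  have hn0' : (n : ℝ) ≠ 0 := ne_of_gt hn0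
  have hn1 : (n : ℝ) - 1 ≠ 0 := by
    have : (2 : ℝ) ≤ n := by exact_mod_cast hn
    intro h; linarith
  set q : Fin (n + 1) → E n := ⇑b with hq
  set s : E n := ((n : ℝ) - 1)⁻¹ • ((2 : ℝ) • c - ∑ i, q i) with hs
  set w : Fin (n + 1) → E n := fun j => (n : ℝ) • (q j + s) with hw
  -- linear independence of differences of w
  have hwdiff : LinearIndependent ℝ (fun i : Fin n => w i.succ - w 0) := by
    have hbI : AffineIndependent ℝ q := b.ind
    have h1 := (linind_diffs hbI).units_smul (fun _ => Units.mk0 (n : ℝ) hn0')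
    have h2 : (fun i : Fin n => w i.succ - w 0)
        = fun i : Fin n => (Units.mk0 (n : ℝ) hn0' : ℝˣ) • (q i.succ - q 0) := by
      funext i
      show w i.succ - w 0 = (n : ℝ) • (q i.succ - q 0)
      rw [hw]
      simp only
      module
    rw [h2]
    exact h1
  obtain ⟨T, v, hTv⟩ := exists_image_eq (by omega : 0 < n) p w hp hwdiff
  refine ⟨T, s, v, ?_, ?_⟩
  · -- L + s ⊆ simplex
    rw [hTv]
    rintro y ⟨x, hx, rfl⟩
    -- y = s +ᵥ x
    set μ : Fin (n + 1) → ℝ := fun j => (b.coord j x + 1 - 2 * b.coord j c) / n with hμ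
    have hcoord_le : ∀ j, 2 * b.coord j c - b.coord j x ≤ 1 := by
      intro j
      have hx2 : (2 : ℝ) • c - x ∈ L := (hsymc x).1 hx
      have := (abs_le.1 (hbnd _ hx2 j)).2
      rwa [affine_two_smul_sub (b.coord j) c x] at this
    have hμ0 : ∀ j, 0 ≤ μ j := by
      intro j
      apply div_nonneg _ (le_of_lt hn0)
      have := hcoord_le j
      linarith
    have hsumx : ∑ j, b.coord j x = 1 := b.sum_coord_apply_eq_one x
    have hsumc : ∑ j, b.coord j c = 1 := b.sum_coord_apply_eq_one c
    set a : Fin (n + 1) → ℝ := fun j => b.coord j x + 1 - 2 * b.coord j c with ha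
    have hsuma : ∑ j, a j = (n : ℝ) := by
      rw [ha]
      rw [Finset.sum_sub_distrib, Finset.sum_add_distrib, hsumx, ← Finset.mul_sum, hsumc]
      simp only [Finset.sum_const, Finset.card_fin, nsmul_eq_mul, mul_one, Nat.cast_add,
        Nat.cast_one]
      ring
    have hμsum : ∑ j, μ j = 1 := by
      rw [hμ]
      rw [← Finset.sum_div]
      rw [show (fun j => b.coord j x + 1 - 2 * b.coord j c) = a from rfl]
      rw [hsuma]
      field_simp
    have hqx : ∑ j, b.coord j x • q j = x := b.linear_combination_coord_eq_self x
    have hqc : ∑ j, b.coord j c • q j = c := b.linear_combination_coord_eq_self c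
    have hkey : ∑ j, μ j • w j = x + s := by
      have hterm : ∀ j, μ j • w j = a j • q j + a j • s := by
        intro j
        rw [hw]
        simp only
        rw [smul_smul]
        have : μ j * (n : ℝ) = a j := by
          rw [hμ]; field_simp
          rfl
        rw [this, smul_add]
      rw [Finset.sum_congr rfl fun j _ => hterm j]
      rw [Finset.sum_add_distrib, ← Finset.sum_smul, hsuma]
      have haq : ∑ j, a j • q j = x + (∑ j, q j) - (2 : ℝ) • c := by
        have hterm2 : ∀ j, a j • q j
            = b.coord j x • q j + q j - (2 : ℝ) • (b.coord j c • q j) := by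
          intro j
          rw [ha]
          simp only
          module
        rw [Finset.sum_congr rfl fun j _ => hterm2 j]
        rw [Finset.sum_sub_distrib, Finset.sum_add_distrib, hqx, ← Finset.smul_sum, hqc]
      rw [haq]
      have hns : ((n : ℝ)) • s = s + ((2 : ℝ) • c - ∑ j, q j) := by
        have h3 : ((n : ℝ) - 1) • s = (2 : ℝ) • c - ∑ j, q j := by
          rw [hs]
          exact smul_inv_smul₀ hn1 _
        rw [← h3]
        module
      rw [hns]
      abel
    have hmem : x + s = Finset.univ.centerMass μ w := by
      rw [Finset.centerMass_eq_of_sum_1 _ _ hμsum, hkey]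
    show s +ᵥ x ∈ convexHull ℝ (Set.range w)
    have : s +ᵥ x = x + s := by rw [vadd_eq_add]; abel
    rw [this, hmem]
    exact Finset.centerMass_mem_convexHull Finset.univ (fun i _ => hμ0 i)
      (by rw [hμsum]; norm_num) (fun i _ => Set.mem_range_self i)
  · -- simplex ⊆ n • (L + s)
    rw [hTv]
    apply convexHull_min
    · rintro _ ⟨j, rfl⟩
      have h1 : s + q j ∈ s +ᵥ L := Set.vadd_mem_vadd_set (hbL j)
      have h2 := Set.smul_mem_smul_set (a := (n : ℝ)) h1
      have : w j = (n : ℝ) • (s + q j) := by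
        rw [hw]; simp only; rw [add_comm]
      rw [this]
      exact h2
    · exact (hconv.vadd s).smul (n : ℝ)


lemma upper_witness_one (L : Set (E 1)) (hcomp : IsCompact L) (hconv : Convex ℝ L)
    (hint : (interior L).Nonempty) (c : E 1) (hsymc : ∀ x, x ∈ L ↔ (2 : ℝ) • c - x ∈ L)
    (p : Fin 2 → E 1) (hp : AffineIndependent ℝ p) :
    ∃ (T : E 1 ≃ₗ[ℝ] E 1) (u v : E 1),
      (u +ᵥ L) ⊆ (T : E 1 →ₗ[ℝ] E 1) '' (v +ᵥ convexHull ℝ (Set.range p)) ∧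
      (T : E 1 →ₗ[ℝ] E 1) '' (v +ᵥ convexHull ℝ (Set.range p)) ⊆ (1 : ℝ) • (u +ᵥ L) := by
  have hLne : L.Nonempty := hint.mono interior_subset
  obtain ⟨q1, hq1L, hq1max⟩ := hcomp.exists_isMaxOn hLne
    ((EuclideanSpace.proj (0 : Fin 1)).continuous.continuousOn)
  have hmax : ∀ y ∈ L, y 0 ≤ q1 0 := hq1max
  set q0 : E 1 := (2 : ℝ) • c - q1 with hq0
  have hq0L : q0 ∈ L := (hsymc q1).1 hq1L
  have hq0c : q0 0 = 2 * c 0 - q1 0 := by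
    rw [hq0, PiLp.sub_apply, PiLp.smul_apply, smul_eq_mul]
  have hmin : ∀ y ∈ L, q0 0 ≤ y 0 := by
    intro y hy
    have h1 : (2 : ℝ) • c - y ∈ L := (hsymc y).1 hy
    have h2 := hmax _ h1
    rw [PiLp.sub_apply, PiLp.smul_apply, smul_eq_mul] at h2
    rw [hq0c]; linarith
  have hlt : q0 0 < q1 0 := by
    obtain ⟨x0, ε, hε, hball⟩ := exists_ball L hint
    have hmem : ∀ (t : ℝ), |t| < ε → x0 + t • EuclideanSpace.single (0 : Fin 1) (1:ℝ) ∈ L := by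
      intro t ht
      apply hball
      simp only [Metric.mem_ball, dist_eq_norm]
      rw [show x0 + t • EuclideanSpace.single (0 : Fin 1) (1:ℝ) - x0
        = t • EuclideanSpace.single (0 : Fin 1) (1:ℝ) by abel]
      rw [norm_smul, EuclideanSpace.norm_single]
      simpa using ht
    have hp1 := hmax _ (hmem (ε/2) (by rw [abs_of_pos (by linarith)]; linarith))
    have hp2 := hmin _ (hmem (-(ε/2)) (by rw [abs_of_neg (by linarith)]; simp; linarith))
    rw [PiLp.add_apply, PiLp.smul_apply, EuclideanSpace.single_apply] at hp1 hp2
    norm_num at hp1 hp2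
    linarith
  set w : Fin 2 → E 1 := ![q0, q1] with hwdef
  have hne : q1 - q0 ≠ 0 := by
    intro h
    have : q1 = q0 := by rwa [sub_eq_zero] at h
    rw [this] at hlt; exact lt_irrefl _ hlt
  have hwdiff : LinearIndependent ℝ (fun i : Fin 1 => w i.succ - w 0) := by
    have : (fun i : Fin 1 => w i.succ - w 0) = fun _ : Fin 1 => q1 - q0 := by
      funext i
      have h1 : i = 0 := Subsingleton.elim i 0
      subst h1
      simp [hwdef]
    rw [this]
    exact linearIndependent_unique_iff.2 hne
  obtain ⟨T, v, hTv⟩ := exists_image_eq (by norm_num) p w hp hwdiff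
  refine ⟨T, 0, v, ?_, ?_⟩
  · rw [hTv]
    rintro y ⟨x, hx, rfl⟩
    show (0 : E 1) +ᵥ x ∈ convexHull ℝ (Set.range w)
    rw [vadd_eq_add, zero_add]
    have hd : 0 < q1 0 - q0 0 := by linarith
    set t : ℝ := (x 0 - q0 0) / (q1 0 - q0 0) with ht
    have ht0 : 0 ≤ t := div_nonneg (by linarith [hmin x hx]) (le_of_lt hd)
    have ht1 : t ≤ 1 := (div_le_one hd).2 (by linarith [hmax x hx])
    have hxid : x = (1 - t) • q0 + t • q1 := by
      ext k
      have hk : k = 0 := Subsingleton.elim k 0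
      subst hk
      rw [PiLp.add_apply, PiLp.smul_apply, PiLp.smul_apply, smul_eq_mul, smul_eq_mul]
      have h5 : t * (q1 0 - q0 0) = x 0 - q0 0 := div_mul_cancel₀ _ (ne_of_gt hd)
      rw [mul_sub] at h5
      nlinarith [h5]
    set μ : Fin 2 → ℝ := ![1 - t, t] with hμ
    have hμsum : ∑ j, μ j = 1 := by
      rw [Fin.sum_univ_two]
      simp [hμ]
    have hmm : x = Finset.univ.centerMass μ w := by
      rw [Finset.centerMass_eq_of_sum_1 _ _ hμsum, Fin.sum_univ_two]
      simp only [hμ, hwdef, Matrix.cons_val_zero, Matrix.cons_val_one, Matrix.head_cons]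
      exact hxid
    rw [hmm]
    refine Finset.centerMass_mem_convexHull Finset.univ ?_ (by rw [hμsum]; norm_num)
      (fun i _ => Set.mem_range_self i)
    intro i _
    refine Fin.cases ?_ ?_ i
    · simp [hμ]; linarith
    · intro i'
      have h1 : i' = 0 := Subsingleton.elim i' 0
      subst h1
      simp [hμ]; linarith
  · rw [hTv]
    apply convexHull_min
    · rintro _ ⟨j, rfl⟩
      have hwL : w j ∈ L := by
        refine Fin.cases ?_ ?_ j
        · simpa [hwdef] using hq0L
        · intro i'
          have h1 : i' = 0 := Subsingleton.elim i' 0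
          subst h1
          simpa [hwdef] using hq1L
      have : w j = (1 : ℝ) • ((0 : E 1) +ᵥ w j) := by
        rw [one_smul, vadd_eq_add, zero_add]
      rw [this]
      exact Set.smul_mem_smul_set (Set.vadd_mem_vadd_set hwL)
    · exact (hconv.vadd 0).smul (1 : ℝ)


lemma lower_bound (L : Set (E n)) (hconv : Convex ℝ L) (hne : L.Nonempty) (c : E n)
    (hsymc : ∀ x, x ∈ L ↔ (2 : ℝ) • c - x ∈ L)
    (p : Fin (n + 1) → E n) (hp : AffineIndependent ℝ p) (r : ℝ) (hr : 0 < r)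
    (T : E n ≃ₗ[ℝ] E n) (u v : E n)
    (h1 : (u +ᵥ L) ⊆ (T : E n →ₗ[ℝ] E n) '' (v +ᵥ convexHull ℝ (Set.range p)))
    (h2 : (T : E n →ₗ[ℝ] E n) '' (v +ᵥ convexHull ℝ (Set.range p)) ⊆ r • (u +ᵥ L)) :
    (n : ℝ) ≤ r := by
  set q : Fin (n + 1) → E n := fun j => T (v + p j) with hqdef
  have himg := image_vadd_hull T v p
  rw [himg] at h1 h2
  -- affine independence of q
  have hqind : AffineIndependent ℝ q := by
    set gm : E n →ᵃ[ℝ] E n :=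
      (T.toLinearMap.toAffineMap).comp (AffineEquiv.constVAdd ℝ (E n) v).toAffineMap with hgm
    have hinj : Function.Injective gm := by
      have : Function.Injective (fun x : E n => T (v + x)) := by
        intro a b hab
        simp only at hab
        have := T.injective hab
        exact add_left_cancel this
      exact this
    have := hp.map' gm hinj
    have hqe : q = ⇑gm ∘ p := by
      funext j
      show T (v + p j) = gm (p j)
      simp [hgm, AffineEquiv.constVAdd_apply, vadd_eq_add]
    rwa [hqe]
  have htot : affineSpan ℝ (Set.range q) = ⊤ := by
    rw [hqind.affineSpan_eq_top_iff_card_eq_finrank_add_one]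
    simp [finrank_euclideanSpace_fin]
  set bq : AffineBasis (Fin (n + 1)) ℝ (E n) := ⟨q, hqind, htot⟩ with hbq
  have hbqc : ⇑bq = q := rfl
  have hcL : c ∈ L := center_mem hconv hne hsymc
  have hc' : u + c ∈ convexHull ℝ (Set.range q) := by
    apply h1
    exact ⟨c, hcL, rfl⟩
  set lam : Fin (n + 1) → ℝ := fun j => bq.coord j (u + c) with hlam
  set tau : Fin (n + 1) → ℝ := fun j => bq.coord j 0 with htau
  have hterm : ∀ j, 0 ≤ 2 * lam j - (r⁻¹ + (1 - r⁻¹) * tau j) := by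
    intro j
    have hqj : q j ∈ r • (u +ᵥ L) :=
      h2 (subset_convexHull ℝ _ (Set.mem_range_self j))
    obtain ⟨z, hz, hqz⟩ := hqj
    obtain ⟨m, hm, rfl⟩ := hz
    -- z = u +ᵥ m, q j = r • (u +ᵥ m)
    have hm2 : (2 : ℝ) • c - m ∈ L := (hsymc m).1 hm
    have hmem2 : u + ((2 : ℝ) • c - m) ∈ convexHull ℝ (Set.range q) :=
      h1 ⟨(2 : ℝ) • c - m, hm2, rfl⟩
    have hrw : u + ((2 : ℝ) • c - m) = (2 : ℝ) • (u + c) - (u +ᵥ m) := by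
      rw [vadd_eq_add]; module
    rw [hrw] at hmem2
    have hge := coord_nonneg bq (by rw [hbqc]; exact hmem2) j
    rw [affine_two_smul_sub (bq.coord j) (u + c) (u +ᵥ m)] at hge
    have hz2 : (u +ᵥ m) = r⁻¹ • q j := by
      rw [← hqz, inv_smul_smul₀ (ne_of_gt hr)]
    rw [hz2, affine_inv_smul (bq.coord j) r (q j)] at hge
    have hcoord1 : bq.coord j (q j) = 1 := by
      rw [show q j = bq j from rfl]
      simp
    rw [hcoord1] at hge
    simp only [mul_one] at hge
    have : lam j = bq.coord j (u + c) := rfl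
    have : tau j = bq.coord j 0 := rfl
    simp only [hlam, htau]
    linarith [hge]
  have hsumlam : ∑ j, lam j = 1 := bq.sum_coord_apply_eq_one (u + c)
  have hsumtau : ∑ j, tau j = 1 := bq.sum_coord_apply_eq_one 0
  have hsum := Finset.sum_nonneg (fun j (_ : j ∈ Finset.univ) => hterm j)
  have hsumval : ∑ j, (2 * lam j - (r⁻¹ + (1 - r⁻¹) * tau j))
      = 2 - (((n : ℝ) + 1) * r⁻¹ + (1 - r⁻¹)) := by
    rw [Finset.sum_sub_distrib, ← Finset.mul_sum, hsumlam, Finset.sum_add_distrib,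
      ← Finset.mul_sum, hsumtau, Finset.sum_const, Finset.card_fin]
    ring
  rw [hsumval] at hsum
  -- 0 ≤ 1 - n * r⁻¹
  have hfin : (n : ℝ) * r⁻¹ ≤ 1 := by linarith
  have := (div_le_one hr).1 (by rw [div_eq_mul_inv]; exact hfin)
  exact this


end BMaux

/-- For any symmetric convex body `L` in `ℝⁿ` and any simplex `S` in `ℝⁿ`,
the Banach-Mazur distance satisfies `d(L, S) = n`. -/
theorem stmt9 (n : ℕ) (L S : Set (E n)) (hL : IsConvexBody L)
    (hsym : IsCentrallySymmetric L) (hS : IsConvexBody S)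
    (hsimplex : ∃ p : Fin (n + 1) → E n, AffineIndependent ℝ p ∧
      S = convexHull ℝ (Set.range p)) :
    bmDist L S = n := by
  obtain ⟨p, hpind, hSeq⟩ := hsimplex
  obtain ⟨c, hsymc⟩ := hsym
  obtain ⟨hcomp, hconv, hint⟩ := hL
  unfold bmDist
  set A : Set ℝ := {r : ℝ | 0 < r ∧ ∃ (T : E n ≃ₗ[ℝ] E n) (u v : E n),
    (u +ᵥ L) ⊆ (T : E n →ₗ[ℝ] E n) '' (v +ᵥ S) ∧
    (T : E n →ₗ[ℝ] E n) '' (v +ᵥ S) ⊆ r • (u +ᵥ L)} with hA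
  rcases Nat.eq_zero_or_pos n with h0 | hpos
  · subst h0
    haveI hsing : Subsingleton (E 0) := ⟨fun a b => PiLp.ext fun i => i.elim0⟩
    obtain ⟨xL, hxL⟩ : L.Nonempty := hint.mono interior_subset
    have hp0S : p 0 ∈ S := by
      rw [hSeq]; exact subset_convexHull ℝ _ ⟨0, rfl⟩
    have hAeq : A = Set.Ioi (0 : ℝ) := by
      ext r
      simp only [hA, Set.mem_setOf_eq, Set.mem_Ioi]
      constructor
      · rintro ⟨hr, -⟩; exact hr
      · intro hr
        refine ⟨hr, LinearEquiv.refl ℝ (E 0), 0, 0, ?_, ?_⟩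
        · intro y _
          exact ⟨(0 : E 0) +ᵥ p 0, Set.vadd_mem_vadd_set hp0S, Subsingleton.elim _ _⟩
        · rintro y ⟨z, _, rfl⟩
          exact ⟨(0 : E 0) +ᵥ xL, Set.vadd_mem_vadd_set hxL, Subsingleton.elim _ _⟩
    rw [hAeq, csInf_Ioi]
    norm_num
  · have hlb : ∀ r ∈ A, (n : ℝ) ≤ r := by
      rintro r ⟨hr, T, u, v, h1, h2⟩
      rw [hSeq] at h1 h2
      exact BMaux.lower_bound L hconv (hint.mono interior_subset) c hsymc p hpind r hr T u v h1 h2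
    have hmem : (n : ℝ) ∈ A := by
      by_cases h1 : n = 1
      · subst h1
        obtain ⟨T, u, v, hh1, hh2⟩ :=
          BMaux.upper_witness_one L hcomp hconv hint c hsymc p hpind
        refine ⟨by norm_num, T, u, v, ?_, ?_⟩
        · rw [hSeq]; exact hh1
        · rw [hSeq]
          rw [show ((1 : ℕ) : ℝ) = (1 : ℝ) by norm_num]
          exact hh2
      · have h2 : 2 ≤ n := by omega
        obtain ⟨T, u, v, hh1, hh2⟩ :=
          BMaux.upper_witness h2 L hcomp hconv hint c hsymc p hpind
        refine ⟨by positivity, T, u, v, ?_, ?_⟩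
        · rw [hSeq]; exact hh1
        · rw [hSeq]; exact hh2
    exact le_antisymm (csInf_le ⟨(n : ℝ), fun r hr => hlb r hr⟩ hmem)
      (le_csInf ⟨_, hmem⟩ hlb)
end
end

section
/- If K is a convex body in the plane and S is a triangle with K ⊆ S ⊆ -rK + v for some r > 0 and v ∈ R^2, then r ≥ 2. -/
open Pointwise

noncomputable section

/-- Weights for membership in the convex hull of a finite family. -/
lemma exists_weights_of_mem_convexHull {ι : Type*} [Fintype ι] [DecidableEq ι]
    {p : ι → E 2} {x : E 2} (hx : x ∈ convexHull ℝ (Set.range p)) :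
    ∃ w : ι → ℝ, (∀ i, 0 ≤ w i) ∧ ∑ i, w i = 1 ∧ ∑ i, w i • p i = x := by
  rw [convexHull_range_eq_exists_affineCombination] at hx
  obtain ⟨s, w, h0, h1, rfl⟩ := hx
  refine ⟨fun j => if j ∈ s then w j else 0, fun j => ?_, ?_, ?_⟩
  · dsimp only
    split_ifs with h
    · exact h0 j h
    · exact le_rfl
  · dsimp only
    rw [Finset.sum_ite_mem, Finset.univ_inter, h1]
  · dsimp only
    rw [Finset.affineCombination_eq_linear_combination s p w h1]
    simp only [ite_smul, zero_smul]
    rw [Finset.sum_ite_mem, Finset.univ_inter]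

/-- If `K` is a convex body in the plane and `S` is a triangle with
`K ⊆ S ⊆ -r • K + v` for some `r > 0` and `v ∈ ℝ²`, then `r ≥ 2`. -/
theorem stmt11 (K S : Set (E 2)) (hK : IsConvexBody K) (hS : IsTriangle S)
    (r : ℝ) (hr : 0 < r) (v : E 2)
    (hKS : K ⊆ S) (hSK : S ⊆ v +ᵥ ((-r) • K)) :
    2 ≤ r := by
  obtain ⟨p, hind, rfl⟩ := hS
  have hsub : convexHull ℝ (Set.range p) ⊆
      v +ᵥ ((-r) • convexHull ℝ (Set.range p)) :=
    hSK.trans (Set.vadd_set_mono (Set.smul_set_mono hKS))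
  -- for each vertex, obtain convex weights
  have key : ∀ i : Fin 3, ∃ w : Fin 3 → ℝ, (∀ j, 0 ≤ w j) ∧ ∑ j, w j = 1 ∧
      v + (-r) • (∑ j, w j • p j) = p i := by
    intro i
    have hp : p i ∈ v +ᵥ ((-r) • convexHull ℝ (Set.range p)) :=
      hsub (subset_convexHull ℝ _ ⟨i, rfl⟩)
    obtain ⟨y, hy, hyeq⟩ := hp
    obtain ⟨x, hx, rfl⟩ := hy
    obtain ⟨w, h0, h1, h2⟩ := exists_weights_of_mem_convexHull hx
    exact ⟨w, h0, h1, by rw [h2]; exact hyeq⟩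
  choose w hw0 hw1 hw2 using key
  -- key linear-independence consequence
  have step : ∀ i : Fin 3, i ≠ 0 → r * (w 0 i - w i i) = 1 := by
    intro i hi
    have hsum0 : ∑ j, (r * (w 0 j - w i j)) = 0 := by
      simp only [mul_sub, Finset.sum_sub_distrib, ← Finset.mul_sum, hw1, mul_one, sub_self]
    have hsum2 : ∑ j, ((if j = i then (1:ℝ) else 0) - if j = 0 then 1 else 0) = 0 := by
      rw [Finset.sum_sub_distrib]
      simp [Finset.sum_ite_eq', hi]
    have hvec : ∑ j, (r * (w 0 j - w i j)) • p j =
        ∑ j, ((if j = i then (1:ℝ) else 0) - if j = 0 then 1 else 0) • p j := by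
      have e1 : v + (-r) • (∑ j, w i j • p j) = p i := hw2 i
      have e2 : v + (-r) • (∑ j, w 0 j • p j) = p 0 := hw2 0
      have : (-r) • (∑ j, w i j • p j) - (-r) • (∑ j, w 0 j • p j) = p i - p 0 := by
        rw [← e1, ← e2]; abel
      calc ∑ j, (r * (w 0 j - w i j)) • p j
          = ∑ j, ((-r) • (w i j • p j) - (-r) • (w 0 j • p j)) := by
            refine Finset.sum_congr rfl fun j _ => ?_
            rw [smul_smul, smul_smul, ← sub_smul]
            congr 1
            ring
        _ = (-r) • (∑ j, w i j • p j) - (-r) • (∑ j, w 0 j • p j) := by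
            rw [Finset.sum_sub_distrib, ← Finset.smul_sum, ← Finset.smul_sum]
        _ = p i - p 0 := this
        _ = ∑ j, ((if j = i then (1:ℝ) else 0) - if j = 0 then 1 else 0) • p j := by
            simp [sub_smul, Finset.sum_sub_distrib, Finset.sum_ite_eq', ite_smul]
    have := hind.eq_of_sum_eq_sum (w₁ := fun j => r * (w 0 j - w i j))
      (w₂ := fun j => (if j = i then (1:ℝ) else 0) - if j = 0 then 1 else 0)
      (by rw [hsum0, hsum2]) hvec i (Finset.mem_univ i)
    simpa [hi] using this
  have h1 : r * (w 0 1 - w 1 1) = 1 := step 1 (by decide)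
  have h2 : r * (w 0 2 - w 2 2) = 1 := step 2 (by decide)
  have hs : w 0 0 + w 0 1 + w 0 2 = 1 := by
    have := hw1 0; rwa [Fin.sum_univ_three] at this
  nlinarith [hw0 0 0, hw0 1 1, hw0 2 2, hw0 0 1, hw0 0 2, mul_pos hr hr]
end
end

section
/- If K is a convex body in the plane with Banach-Mazur distance to a triangle S strictly greater than 2, then the Grünbaum distance d_G(K, S) equals 2. -/
open Pointwise

noncomputable section

def det2 (x y : E 2) : ℝ := x 0 * y 1 - x 1 * y 0

lemma det2_combo (a b c z : E 2) (w0 w1 w2 : ℝ) (hs : w0 + w1 + w2 = 1)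
    (hz : z = w0 • a + w1 • b + w2 • c) :
    det2 (b - z) (c - z) = w0 * det2 (b - a) (c - a) ∧
    det2 (z - a) (c - a) = w1 * det2 (b - a) (c - a) ∧
    det2 (b - a) (z - a) = w2 * det2 (b - a) (c - a) := by
  subst hz
  have h0 : w0 = 1 - w1 - w2 := by linarith
  subst h0
  refine ⟨?_, ?_, ?_⟩
  · simp only [det2, PiLp.sub_apply, PiLp.add_apply, PiLp.smul_apply, smul_eq_mul]; ring
  · simp only [det2, PiLp.sub_apply, PiLp.add_apply, PiLp.smul_apply, smul_eq_mul]; ring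
  · simp only [det2, PiLp.sub_apply, PiLp.add_apply, PiLp.smul_apply, smul_eq_mul]; ring

lemma smul_coord (s t : ℝ) (u w : E 2) (j : Fin 2) :
    (s • u + t • w) j = s * u j + t * w j := by
  simp

lemma linIndep_of_det2 {u w : E 2} (h : det2 u w ≠ 0) : LinearIndependent ℝ ![u, w] := by
  rw [LinearIndependent.pair_iff]
  intro s t hst
  have h0 : s * u 0 + t * w 0 = 0 := by rw [← smul_coord, hst]; rfl
  have h1 : s * u 1 + t * w 1 = 0 := by rw [← smul_coord, hst]; rfl
  constructor
  · have hh : s * det2 u w = 0 := by unfold det2; linear_combination w 1 * h0 - w 0 * h1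
    rcases mul_eq_zero.1 hh with h' | h'
    · exact h'
    · exact absurd h' h
  · have hh : t * det2 u w = 0 := by unfold det2; linear_combination u 0 * h1 - u 1 * h0
    rcases mul_eq_zero.1 hh with h' | h'
    · exact h'
    · exact absurd h' h

lemma det2_ne_zero_of_affineIndependent {p : Fin 3 → E 2} (hp : AffineIndependent ℝ p) :
    det2 (p 1 - p 0) (p 2 - p 0) ≠ 0 := by
  intro hdet
  set u := p 1 - p 0 with hu
  set w := p 2 - p 0 with hw
  have hvec : ∀ (s t : ℝ), s * u 0 + t * w 0 = 0 → s * u 1 + t * w 1 = 0 →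
      s • u + t • w = 0 := by
    intro s t e0 e1
    ext j
    fin_cases j
    · rw [smul_coord]; simpa using e0
    · rw [smul_coord]; simpa using e1
  unfold det2 at hdet
  have key : ∃ s t : ℝ, (s ≠ 0 ∨ t ≠ 0) ∧ s • u + t • w = 0 := by
    by_cases h0 : u 0 ≠ 0
    · exact ⟨w 0, -(u 0), Or.inr (by simpa using h0),
        hvec _ _ (by ring) (by linarith)⟩
    by_cases h1 : u 1 ≠ 0
    · exact ⟨w 1, -(u 1), Or.inr (by simpa using h1),
        hvec _ _ (by push_neg at h0; linarith) (by ring)⟩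
    · push_neg at h0 h1
      refine ⟨1, 0, Or.inl one_ne_zero, hvec _ _ (by rw [h0]; ring) (by rw [h1]; ring)⟩
  obtain ⟨s, t, hst, hcomb⟩ := key
  have hsum : ∑ e : Fin 3, ![-(s + t), s, t] e • p e = 0 := by
    rw [Fin.sum_univ_three]
    simp only [Matrix.cons_val_zero, Matrix.cons_val_one, Matrix.head_cons,
      Matrix.cons_val_two, Matrix.tail_cons]
    have : s • u + t • w = s • (p 1 - p 0) + t • (p 2 - p 0) := by rw [← hu, ← hw]
    rw [this] at hcomb
    have : (-(s + t)) • p 0 + s • p 1 + t • p 2 = s • (p 1 - p 0) + t • (p 2 - p 0) := by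
      module
    rw [this]; exact hcomb
  have := affineIndependent_iff.1 hp Finset.univ ![-(s + t), s, t]
    (by rw [Fin.sum_univ_three]; simp) hsum
  rcases hst with h' | h'
  · exact h' (by simpa using this 1 (Finset.mem_univ _))
  · exact h' (by simpa using this 2 (Finset.mem_univ _))

lemma mem_triangle_iff (f : Fin 3 → E 2) (z : E 2) :
    z ∈ convexHull ℝ (Set.range f) ↔ ∃ w : Fin 3 → ℝ, (∀ i, 0 ≤ w i) ∧
      w 0 + w 1 + w 2 = 1 ∧ z = w 0 • f 0 + w 1 • f 1 + w 2 • f 2 := by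
  constructor
  · intro h
    rw [convexHull_range_eq_exists_affineCombination] at h
    obtain ⟨s, w, hw0, hw1, hcomb⟩ := h
    refine ⟨fun i => if i ∈ s then w i else 0, ?_, ?_, ?_⟩
    · intro i
      by_cases hi : i ∈ s
      · simpa [hi] using hw0 i hi
      · simp [hi]
    · have e1 : ∑ i : Fin 3, (fun i => if i ∈ s then w i else 0) i = ∑ i ∈ s, w i := by
        rw [← Finset.sum_subset (Finset.subset_univ s)
          (fun x _ hx => by simp only [if_neg hx])]
        exact Finset.sum_congr rfl (fun x hx => by simp only [if_pos hx])
      rw [← Fin.sum_univ_three (fun i => if i ∈ s then w i else 0), e1, hw1]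
    · have e2 : ∑ i : Fin 3, (fun i => if i ∈ s then w i else 0) i • f i
          = ∑ i ∈ s, w i • f i := by
        rw [← Finset.sum_subset (Finset.subset_univ s)
          (fun x _ hx => by simp only [if_neg hx, zero_smul])]
        exact Finset.sum_congr rfl (fun x hx => by simp only [if_pos hx])
      rw [s.affineCombination_eq_linear_combination _ _ hw1] at hcomb
      rw [← hcomb, ← e2, Fin.sum_univ_three]
  · rintro ⟨w, hw0, hw1, hz⟩
    exact mem_convexHull_of_exists_fintype w f hw0 (by rw [Fin.sum_univ_three]; exact hw1)
      (fun i => Set.mem_range_self i) (by rw [Fin.sum_univ_three]; exact hz.symm)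

lemma triangle_asym_core {p : Fin 3 → E 2} (hp : AffineIndependent ℝ p) {μ r : ℝ}
    (hμneg : μ < 0) (hμr : μ * r = 1) (hr : r < 0) (hr2 : -2 < r)
    (hstep : ∀ x ∈ convexHull ℝ (Set.range p), μ • x ∈ convexHull ℝ (Set.range p))
    (h0L : (0 : E 2) ∈ convexHull ℝ (Set.range p)) : False := by
  have hpL : ∀ i, p i ∈ convexHull ℝ (Set.range p) :=
    fun i => subset_convexHull ℝ _ (Set.mem_range_self i)
  set D := det2 (p 1 - p 0) (p 2 - p 0) with hD
  have hDne : D ≠ 0 := det2_ne_zero_of_affineIndependent hp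
  obtain ⟨t, ht0, htsum, htcomb⟩ := (mem_triangle_iff p 0).1 h0L
  -- coordinate 0
  have key0 : 0 ≤ μ + (1 - μ) * t 0 := by
    obtain ⟨v, hv0, hvsum, hvcomb⟩ := (mem_triangle_iff p (μ • p 0)).1 (hstep _ (hpL 0))
    have e1 := (det2_combo (p 0) (p 1) (p 2) (μ • p 0) (v 0) (v 1) (v 2) hvsum hvcomb).1
    have e2 := (det2_combo (p 0) (p 1) (p 2) (μ • p 0)
      (μ + (1 - μ) * t 0) ((1 - μ) * t 1) ((1 - μ) * t 2)
      (by linear_combination (1 - μ) * htsum) ?_).1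
    · have : μ + (1 - μ) * t 0 = v 0 := by
        have := e1.symm.trans e2
        exact mul_right_cancel₀ hDne this.symm
      rw [this]; exact hv0 0
    · linear_combination (norm := module) ((1:ℝ) - μ) • htcomb
  have key1 : 0 ≤ μ + (1 - μ) * t 1 := by
    obtain ⟨v, hv0, hvsum, hvcomb⟩ := (mem_triangle_iff p (μ • p 1)).1 (hstep _ (hpL 1))
    have e1 := (det2_combo (p 0) (p 1) (p 2) (μ • p 1) (v 0) (v 1) (v 2) hvsum hvcomb).2.1
    have e2 := (det2_combo (p 0) (p 1) (p 2) (μ • p 1)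
      ((1 - μ) * t 0) (μ + (1 - μ) * t 1) ((1 - μ) * t 2)
      (by linear_combination (1 - μ) * htsum) ?_).2.1
    · have : μ + (1 - μ) * t 1 = v 1 := by
        have := e1.symm.trans e2
        exact mul_right_cancel₀ hDne this.symm
      rw [this]; exact hv0 1
    · linear_combination (norm := module) ((1:ℝ) - μ) • htcomb
  have key2 : 0 ≤ μ + (1 - μ) * t 2 := by
    obtain ⟨v, hv0, hvsum, hvcomb⟩ := (mem_triangle_iff p (μ • p 2)).1 (hstep _ (hpL 2))
    have e1 := (det2_combo (p 0) (p 1) (p 2) (μ • p 2) (v 0) (v 1) (v 2) hvsum hvcomb).2.2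
    have e2 := (det2_combo (p 0) (p 1) (p 2) (μ • p 2)
      ((1 - μ) * t 0) ((1 - μ) * t 1) (μ + (1 - μ) * t 2)
      (by linear_combination (1 - μ) * htsum) ?_).2.2
    · have : μ + (1 - μ) * t 2 = v 2 := by
        have := e1.symm.trans e2
        exact mul_right_cancel₀ hDne this.symm
      rw [this]; exact hv0 2
    · linear_combination (norm := module) ((1:ℝ) - μ) • htcomb
  -- sum up : 3μ + (1-μ) ≥ 0, i.e. 1 + 2μ ≥ 0
  have hsum3 : 0 ≤ 1 + 2 * μ := by nlinarith [key0, key1, key2, htsum]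
  have hfin : (1 + 2 * μ) * r ≤ 0 := mul_nonpos_of_nonneg_of_nonpos hsum3 hr.le
  have hexp : (1 + 2 * μ) * r = r + 2 := by linear_combination 2 * hμr
  linarith

lemma triangle_asym {p : Fin 3 → E 2} (hp : AffineIndependent ℝ p) {r : ℝ}
    (hr : r < 0) (hr2 : -2 < r)
    (h : convexHull ℝ (Set.range p) ⊆ r • convexHull ℝ (Set.range p)) : False := by
  set L := convexHull ℝ (Set.range p) with hL
  have hLcomp : IsCompact L := (Set.finite_range p).isCompact_convexHull ℝ
  have hLconv : Convex ℝ L := convex_convexHull ℝ _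
  have hpL : ∀ i, p i ∈ L := fun i => subset_convexHull ℝ _ (Set.mem_range_self i)
  have hrne : r ≠ 0 := ne_of_lt hr
  set μ : ℝ := r⁻¹ with hμ
  have hμr : μ * r = 1 := inv_mul_cancel₀ hrne
  have hμneg : μ < 0 := inv_neg''.2 hr
  have hstep : ∀ x ∈ L, μ • x ∈ L := by
    intro x hx
    obtain ⟨y, hy, hyx⟩ := Set.mem_smul_set.1 (h hx)
    have : μ • x = y := by rw [← hyx, smul_smul, hμ, inv_mul_cancel₀ hrne, one_smul]
    rw [this]; exact hy
  have hiter : ∀ (n : ℕ), ∀ x ∈ L, μ ^ n • x ∈ L := by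
    intro n
    induction n with
    | zero => intro x hx; simpa using hx
    | succ k ih =>
      intro x hx
      have h' := hstep _ (ih x hx)
      rw [smul_smul, ← pow_succ'] at h'
      exact h'
  rcases lt_trichotomy r (-1) with hcase | hcase | hcase
  · -- r < -1 : |μ| < 1, get 0 ∈ L
    have habs : |μ| < 1 := by
      have h1 : 1 < |r| := by rw [abs_of_neg hr]; linarith
      rw [hμ, abs_inv]
      exact inv_lt_one_of_one_lt₀ h1
    have h0L : (0 : E 2) ∈ L := by
      have htends : Filter.Tendsto (fun n => μ ^ n • p 0) Filter.atTop (nhds 0) := by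
        have h' := (tendsto_pow_atTop_nhds_zero_of_abs_lt_one habs).smul_const (p 0)
        simpa using h'
      exact hLcomp.isClosed.mem_of_tendsto htends
        (Filter.Eventually.of_forall (fun n => hiter n _ (hpL 0)))
    exact triangle_asym_core hp hμneg hμr hr hr2 hstep h0L
  · -- r = -1
    have hμval : μ = -1 := by rw [hμ, hcase]; norm_num
    have h0L : (0 : E 2) ∈ L := by
      have hm : (-1 : ℝ) • p 0 ∈ L := by rw [← hμval]; exact hstep _ (hpL 0)
      have h' := hLconv (hpL 0) hm (by norm_num : (0:ℝ) ≤ (1:ℝ)/2)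
        (by norm_num : (0:ℝ) ≤ (1:ℝ)/2) (by norm_num)
      simpa using h'
    exact triangle_asym_core hp hμneg hμr hr hr2 hstep h0L
  · -- -1 < r < 0
    have habs : 1 < |μ| := by
      have h1 : |r| < 1 := abs_lt.2 ⟨by linarith, by linarith⟩
      have h2 : 0 < |r| := abs_pos.2 hrne
      rw [hμ, abs_inv]
      exact (one_lt_inv_iff₀).2 ⟨h2, h1⟩
    obtain ⟨C, hC⟩ := hLcomp.isBounded.exists_norm_le
    have hzero : ∀ x ∈ L, x = 0 := by
      intro x hx
      by_contra hxne
      have hxpos : 0 < ‖x‖ := norm_pos_iff.2 hxne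
      obtain ⟨n, hn⟩ := pow_unbounded_of_one_lt (C / ‖x‖) habs
      have hle := hC _ (hiter n x hx)
      have heq : ‖μ ^ n • x‖ = |μ| ^ n * ‖x‖ := by
        rw [norm_smul, Real.norm_eq_abs, abs_pow]
      have hgt : C < |μ| ^ n * ‖x‖ := (div_lt_iff₀ hxpos).1 hn
      linarith [heq ▸ hle]
    have h01 : (0 : Fin 3) = 1 :=
      hp.injective (by rw [hzero _ (hpL 0), hzero _ (hpL 1)])
    exact absurd h01 (by decide)

lemma exists_affineEquiv (p q : Fin 3 → E 2) (hp : det2 (p 1 - p 0) (p 2 - p 0) ≠ 0)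
    (hq : det2 (q 1 - q 0) (q 2 - q 0) ≠ 0) :
    ∃ G : E 2 ≃ᵃ[ℝ] E 2, ∀ i, G (p i) = q i := by
  have hcard : Fintype.card (Fin 2) = Module.finrank ℝ (E 2) := by
    simp [finrank_euclideanSpace_fin]
  have hlip : LinearIndependent ℝ ![p 1 - p 0, p 2 - p 0] := linIndep_of_det2 hp
  have hliq : LinearIndependent ℝ ![q 1 - q 0, q 2 - q 0] := linIndep_of_det2 hq
  set bp := basisOfLinearIndependentOfCardEqFinrank hlip hcard with hbp
  set bq := basisOfLinearIndependentOfCardEqFinrank hliq hcard with hbq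
  set Lm := bp.equiv bq (Equiv.refl _) with hLm
  have hLmap : ∀ i : Fin 2, Lm (![p 1 - p 0, p 2 - p 0] i) = ![q 1 - q 0, q 2 - q 0] i := by
    intro i
    have h1 : ![p 1 - p 0, p 2 - p 0] i = bp i := by
      rw [hbp, coe_basisOfLinearIndependentOfCardEqFinrank]
    have h2 : Lm (bp i) = bq i := by rw [hLm]; simp [Module.Basis.equiv_apply]
    have h3 : (bq : Fin 2 → E 2) i = ![q 1 - q 0, q 2 - q 0] i := by
      rw [hbq, coe_basisOfLinearIndependentOfCardEqFinrank]
    rw [h1, h2, h3]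
  refine ⟨((AffineEquiv.constVAdd ℝ (E 2) (-(p 0))).trans Lm.toAffineEquiv).trans
    (AffineEquiv.constVAdd ℝ (E 2) (q 0)), ?_⟩
  intro i
  have happ : ∀ x, (((AffineEquiv.constVAdd ℝ (E 2) (-(p 0))).trans Lm.toAffineEquiv).trans
      (AffineEquiv.constVAdd ℝ (E 2) (q 0))) x = q 0 + Lm (-(p 0) + x) := by
    intro x
    simp [AffineEquiv.trans_apply, AffineEquiv.constVAdd_apply, LinearEquiv.coe_toAffineEquiv]
  rw [happ]
  fin_cases i
  · show q 0 + Lm (-(p 0) + p 0) = q 0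
    simp
  · show q 0 + Lm (-(p 0) + p 1) = q 1
    have h1 := hLmap 0
    simp only [Matrix.cons_val_zero] at h1
    have : -(p 0) + p 1 = p 1 - p 0 := by abel
    rw [this, h1]
    abel
  · show q 0 + Lm (-(p 0) + p 2) = q 2
    have h1 := hLmap 1
    simp only [Matrix.cons_val_one, Matrix.head_cons, Matrix.cons_val_zero] at h1
    have : -(p 0) + p 2 = p 2 - p 0 := by abel
    rw [this, h1]
    abel

lemma det2_continuous : Continuous (fun zw : E 2 × E 2 => det2 zw.1 zw.2) := by
  have h0 : Continuous (fun x : E 2 => x 0) := (EuclideanSpace.proj (0 : Fin 2)).continuous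
  have h1 : Continuous (fun x : E 2 => x 1) := (EuclideanSpace.proj (1 : Fin 2)).continuous
  unfold det2
  fun_prop


lemma affineEquiv_decomp (F : E 2 ≃ᵃ[ℝ] E 2) (x : E 2) :
    F x = F.linear x + F 0 := by
  have h := congrFun (AffineMap.decomp (F : E 2 →ᵃ[ℝ] E 2)) x
  simpa using h

lemma bm_le {K S : Set (E 2)} (r : ℝ) (hr : 0 < r)
    (F G : E 2 ≃ᵃ[ℝ] E 2) (h1 : (F : E 2 → E 2) '' K ⊆ (G : E 2 → E 2) '' S)
    (h2 : (G : E 2 → E 2) '' S ⊆ r • ((F : E 2 → E 2) '' K)) :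
    bmDist K S ≤ r := by
  set A := F.linear with hA
  set B := G.linear with hB
  set T : E 2 ≃ₗ[ℝ] E 2 := B.trans A.symm with hT
  set u := A.symm (F 0) with hu
  set v := B.symm (G 0) with hv
  have hAF : ∀ x, A.symm (F x) = u + x := by
    intro x
    rw [affineEquiv_decomp F x, map_add, hu]
    rw [LinearEquiv.symm_apply_apply]
    abel
  have hBG : ∀ y, T (v + y) = A.symm (G y) := by
    intro y
    rw [affineEquiv_decomp G y]
    show A.symm (B (v + y)) = A.symm (B y + G 0)
    congr 1
    rw [map_add, hv, LinearEquiv.apply_symm_apply]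
    abel
  have hmem : r ∈ {r : ℝ | 0 < r ∧ ∃ (T : E 2 ≃ₗ[ℝ] E 2) (u v : E 2),
      (u +ᵥ K) ⊆ (T : E 2 →ₗ[ℝ] E 2) '' (v +ᵥ S) ∧
      (T : E 2 →ₗ[ℝ] E 2) '' (v +ᵥ S) ⊆ r • (u +ᵥ K)} := by
    refine ⟨hr, T, u, v, ?_, ?_⟩
    · rintro z ⟨k, hk, rfl⟩
      have hFk : F k ∈ (G : E 2 → E 2) '' S := h1 ⟨k, hk, rfl⟩
      obtain ⟨y, hy, hGy⟩ := hFk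
      refine ⟨v + y, ⟨y, hy, rfl⟩, ?_⟩
      show T (v + y) = u +ᵥ k
      rw [hBG, hGy, hAF]
      rfl
    · rintro z ⟨w, ⟨y, hy, rfl⟩, rfl⟩
      have hGy : G y ∈ r • ((F : E 2 → E 2) '' K) := h2 ⟨y, hy, rfl⟩
      obtain ⟨w', ⟨k, hk, rfl⟩, hrw⟩ := Set.mem_smul_set.1 hGy
      refine Set.mem_smul_set.2 ⟨u +ᵥ k, ⟨k, hk, rfl⟩, ?_⟩
      show r • (u + k) = T (v +ᵥ y)
      have : T (v + y) = A.symm (G y) := hBG y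
      rw [show (v +ᵥ y) = v + y from rfl, this, ← hrw, map_smul, hAF]
  have hbdd : BddBelow {r : ℝ | 0 < r ∧ ∃ (T : E 2 ≃ₗ[ℝ] E 2) (u v : E 2),
      (u +ᵥ K) ⊆ (T : E 2 →ₗ[ℝ] E 2) '' (v +ᵥ S) ∧
      (T : E 2 →ₗ[ℝ] E 2) '' (v +ᵥ S) ⊆ r • (u +ᵥ K)} :=
    ⟨0, fun x hx => hx.1.le⟩
  exact csInf_le hbdd hmem

lemma det2_expand (a b c x : E 2) :
    det2 (b - x) (c - x) =
      det2 (b - a) (c - a) - det2 (x - a) (c - a) - det2 (b - a) (x - a) := by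
  simp only [det2, PiLp.sub_apply]; ring

lemma det2_cramer (a b c x : E 2) :
    det2 (b - a) (c - a) • x =
      det2 (b - x) (c - x) • a + det2 (x - a) (c - a) • b + det2 (b - a) (x - a) • c := by
  ext j
  fin_cases j <;>
    simp only [det2, PiLp.sub_apply, PiLp.smul_apply, PiLp.add_apply, smul_eq_mul,
      Fin.zero_eta, Fin.mk_one] <;>
    ring



lemma gr_upper {K S : Set (E 2)} (hK : IsConvexBody K) (hS : IsTriangle S) :
    ∃ (F G : E 2 ≃ᵃ[ℝ] E 2),
      (F : E 2 → E 2) '' K ⊆ (G : E 2 → E 2) '' S ∧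
      (G : E 2 → E 2) '' S ⊆ (-2 : ℝ) • ((F : E 2 → E 2) '' K) := by
  obtain ⟨Kc, Kv, Kint⟩ := hK
  obtain ⟨pS, hpS, hSeq⟩ := hS
  obtain ⟨x0, hx0⟩ := Kint
  have hx0K : x0 ∈ K := interior_subset hx0
  -- continuity of the triangle-area function
  have hfc : Continuous (fun t : E 2 × E 2 × E 2 => |det2 (t.2.1 - t.1) (t.2.2 - t.1)|) := by
    have hpair : Continuous fun t : E 2 × E 2 × E 2 => (t.2.1 - t.1, t.2.2 - t.1) := by
      fun_prop
    exact continuous_abs.comp (det2_continuous.comp hpair)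
  -- maximize over K × K × K
  have hQc : IsCompact (K ×ˢ (K ×ˢ K)) := Kc.prod (Kc.prod Kc)
  have hQne : (K ×ˢ (K ×ˢ K)).Nonempty := ⟨(x0, x0, x0), ⟨hx0K, hx0K, hx0K⟩⟩
  obtain ⟨m, hmQ, hmax⟩ := hQc.exists_isMaxOn hQne hfc.continuousOn
  set a := m.1 with ha
  set b := m.2.1 with hb
  set c := m.2.2 with hc
  have haK : a ∈ K := hmQ.1
  have hbK : b ∈ K := hmQ.2.1
  have hcK : c ∈ K := hmQ.2.2
  set D := det2 (b - a) (c - a) with hD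
  have hmax' : ∀ x ∈ K, ∀ y ∈ K, ∀ z ∈ K, |det2 (y - x) (z - x)| ≤ |D| := by
    intro x hx y hy z hz
    exact hmax (Set.mk_mem_prod hx (Set.mk_mem_prod hy hz))
  -- D ≠ 0
  have hDne : D ≠ 0 := by
    obtain ⟨ε, hε, hball⟩ := Metric.isOpen_iff.1 isOpen_interior x0 hx0
    set y1 := x0 + EuclideanSpace.single (0 : Fin 2) (ε / 2) with hy1
    set y2 := x0 + EuclideanSpace.single (1 : Fin 2) (ε / 2) with hy2
    have hmem : ∀ i : Fin 2, x0 + EuclideanSpace.single i (ε / 2) ∈ K := by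
      intro i
      refine interior_subset (hball ?_)
      rw [Metric.mem_ball, dist_self_add_left, EuclideanSpace.norm_single]
      rw [Real.norm_eq_abs, abs_of_pos (by linarith)]
      linarith
    have hdet : det2 (y1 - x0) (y2 - x0) = (ε / 2) * (ε / 2) := by
      rw [hy1, hy2]
      simp [det2, EuclideanSpace.single_apply]
    have hle := hmax' x0 hx0K y1 (hmem 0) y2 (hmem 1)
    rw [hdet] at hle
    intro hD0
    rw [hD0] at hle
    simp only [abs_zero] at hle
    have hpos : 0 < |ε / 2 * (ε / 2)| := by positivity
    linarith
  -- the enlarged (anticomplementary) triangle, centered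
  set g : E 2 := (3⁻¹ : ℝ) • (a + b + c) with hg
  set z : Fin 3 → E 2 := ![b + c - a - g, a + c - b - g, a + b - c - g] with hz
  have hz0 : z 0 = b + c - a - g := rfl
  have hz1 : z 1 = a + c - b - g := rfl
  have hz2 : z 2 = a + b - c - g := rfl
  have hzdet : det2 (z 1 - z 0) (z 2 - z 0) = 4 * D := by
    rw [hz0, hz1, hz2, hD]
    simp only [det2, PiLp.sub_apply, PiLp.add_apply]
    ring
  have hzdetne : det2 (z 1 - z 0) (z 2 - z 0) ≠ 0 := by
    rw [hzdet]; exact mul_ne_zero (by norm_num) hDne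
  obtain ⟨G, hG⟩ := exists_affineEquiv pS z (det2_ne_zero_of_affineIndependent hpS) hzdetne
  set F := AffineEquiv.constVAdd ℝ (E 2) (-g) with hF
  have hFapp : ∀ x : E 2, F x = -g + x := fun x => rfl
  have hGS : (G : E 2 → E 2) '' S = convexHull ℝ (Set.range z) := by
    rw [hSeq, ← AffineEquiv.coe_toAffineMap, AffineMap.image_convexHull]
    congr 1
    rw [← Set.range_comp]
    refine congrArg _ (funext fun i => ?_)
    simp only [Function.comp_apply, AffineEquiv.coe_toAffineMap]
    exact hG i
  refine ⟨F, G, ?_, ?_⟩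
  · -- F '' K ⊆ G '' S
    rw [hGS]
    rintro w ⟨x, hxK, rfl⟩
    rw [hFapp]
    -- barycentric-type coordinates of x
    set q := det2 (x - a) (c - a) / D with hq
    set s := det2 (b - a) (x - a) / D with hs
    have habsD : (0:ℝ) < |D| := abs_pos.2 hDne
    have hq1 : |q| ≤ 1 := by
      rw [hq, abs_div, div_le_one habsD]
      exact hmax' a haK x hxK c hcK
    have hs1 : |s| ≤ 1 := by
      rw [hs, abs_div, div_le_one habsD]
      exact hmax' a haK b hbK x hxK
    have hp1 : |1 - q - s| ≤ 1 := by
      have hexp : det2 (b - x) (c - x) / D = 1 - q - s := by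
        rw [det2_expand a b c x, hq, hs, ← hD]
        field_simp
      rw [← hexp, abs_div, div_le_one habsD]
      exact hmax' x hxK b hbK c hcK
    have hxcomb : x = (1 - q - s) • a + q • b + s • c := by
      have hcr := det2_cramer a b c x
      have e2 : q * D = det2 (x - a) (c - a) := by
        rw [hq]; field_simp
      have e3 : s * D = det2 (b - a) (x - a) := by
        rw [hs]; field_simp
      have e1 : (1 - q - s) * D = det2 (b - x) (c - x) := by
        rw [det2_expand a b c x, ← hD]
        linear_combination -e2 - e3
      have hcr2 : D • x = ((1 - q - s) * D) • a + (q * D) • b + (s * D) • c := by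
        rw [e1, e2, e3]; exact hcr
      have : D • x = D • ((1 - q - s) • a + q • b + s • c) := by
        rw [hcr2]
        module
      exact smul_right_injective (E 2) hDne this
    rw [mem_triangle_iff]
    refine ⟨![(q + s) / 2, (1 - q) / 2, (1 - s) / 2], ?_, by
      simp only [Matrix.cons_val_zero, Matrix.cons_val_one, Matrix.head_cons,
        Matrix.cons_val_two, Matrix.tail_cons]
      ring, ?_⟩
    · intro i
      fin_cases i
      · show (0:ℝ) ≤ (q + s) / 2
        have : 1 - q - s ≤ 1 := (abs_le.1 hp1).2
        linarith
      · show (0:ℝ) ≤ (1 - q) / 2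
        have : q ≤ 1 := (abs_le.1 hq1).2
        linarith
      · show (0:ℝ) ≤ (1 - s) / 2
        have : s ≤ 1 := (abs_le.1 hs1).2
        linarith
    · show -g + x = ((q + s) / 2) • z 0 + ((1 - q) / 2) • z 1 + ((1 - s) / 2) • z 2
      rw [hz0, hz1, hz2, hg]
      linear_combination (norm := module) hxcomb
  · -- G '' S ⊆ (-2) • F '' K
    rw [hGS]
    intro y hy
    obtain ⟨ω, hω0, hωsum, hωcomb⟩ := (mem_triangle_iff z y).1 hy
    set k := ω 0 • a + ω 1 • b + ω 2 • c with hk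
    have hkK : k ∈ K := by
      have hsub : convexHull ℝ (Set.range ![a, b, c]) ⊆ K := by
        refine convexHull_min ?_ Kv
        rintro _ ⟨i, rfl⟩
        fin_cases i
        · exact haK
        · exact hbK
        · exact hcK
      refine hsub ((mem_triangle_iff ![a, b, c] k).2 ⟨ω, hω0, hωsum, ?_⟩)
      rw [hk]; rfl
    refine Set.mem_smul_set.2 ⟨F k, ⟨k, hkK, rfl⟩, ?_⟩
    rw [hFapp, hk]
    have hω0eq : ω 0 = 1 - ω 1 - ω 2 := by linarith
    rw [hωcomb, hz0, hz1, hz2, hg, hω0eq]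
    module


lemma gr_lower {K S : Set (E 2)} (hK : IsConvexBody K) (hS : IsTriangle S)
    (hd : 2 < bmDist K S) :
    ∀ s ∈ {s : ℝ | ∃ (r : ℝ) (F G : E 2 ≃ᵃ[ℝ] E 2), s = |r| ∧
      (F : E 2 → E 2) '' K ⊆ (G : E 2 → E 2) '' S ∧
      (G : E 2 → E 2) '' S ⊆ r • ((F : E 2 → E 2) '' K)}, (2:ℝ) ≤ s := by
  rintro s ⟨r, F, G, rfl, h1, h2⟩
  by_contra hlt
  push_neg at hlt
  obtain ⟨pS, hpS, hSeq⟩ := hS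
  obtain ⟨hr2, hr2'⟩ := abs_lt.1 hlt
  have hGinj : Function.Injective ⇑(G.toAffineMap) := by
    rw [AffineEquiv.coe_toAffineMap]
    exact G.toEquiv.injective
  have hq : AffineIndependent ℝ (⇑G.toAffineMap ∘ pS) := hpS.map' G.toAffineMap hGinj
  have hGS : (G : E 2 → E 2) '' S = convexHull ℝ (Set.range (⇑G.toAffineMap ∘ pS)) := by
    rw [hSeq, ← AffineEquiv.coe_toAffineMap, AffineMap.image_convexHull, Set.range_comp]
  rcases lt_trichotomy r 0 with hr | hr | hr
  · have hchain : (G : E 2 → E 2) '' S ⊆ r • ((G : E 2 → E 2) '' S) :=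
      h2.trans (Set.smul_set_mono h1)
    rw [hGS] at hchain
    exact triangle_asym hq hr hr2 hchain
  · subst hr
    obtain ⟨x0, hx0⟩ := hK.2.2
    have hFne : ((F : E 2 → E 2) '' K).Nonempty := ⟨F x0, ⟨x0, interior_subset hx0, rfl⟩⟩
    rw [Set.zero_smul_set hFne] at h2
    have hmem : ∀ i : Fin 3, G (pS i) ∈ (G : E 2 → E 2) '' S := by
      intro i
      exact ⟨pS i, hSeq ▸ subset_convexHull ℝ _ (Set.mem_range_self i), rfl⟩
    have h0 : G (pS 0) = 0 := by simpa using h2 (hmem 0)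
    have h1' : G (pS 1) = 0 := by simpa using h2 (hmem 1)
    have : pS 0 = pS 1 := G.toEquiv.injective (h0.trans h1'.symm)
    have h01 : (0 : Fin 3) = 1 := hpS.injective this
    exact absurd h01 (by decide)
  · have hbm := bm_le r hr F G h1 h2
    rw [abs_of_pos hr] at hlt
    linarith

/-- If `K` is a convex body in the plane whose Banach-Mazur distance to a
triangle `S` is strictly greater than `2`, then the Grünbaum distance
`d_G(K, S)` equals `2`. -/
theorem stmt12 (K S : Set (E 2)) (hK : IsConvexBody K) (hS : IsTriangle S)
    (hd : 2 < bmDist K S) :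
    grDist K S = 2 := by
  obtain ⟨F, G, hup1, hup2⟩ := gr_upper hK hS
  have hmem2 : (2:ℝ) ∈ {s : ℝ | ∃ (r : ℝ) (F G : E 2 ≃ᵃ[ℝ] E 2), s = |r| ∧
      (F : E 2 → E 2) '' K ⊆ (G : E 2 → E 2) '' S ∧
      (G : E 2 → E 2) '' S ⊆ r • ((F : E 2 → E 2) '' K)} :=
    ⟨-2, F, G, by norm_num, hup1, hup2⟩
  have hlb := gr_lower hK hS hd
  refine le_antisymm (csInf_le ⟨2, fun s hs => hlb s hs⟩ hmem2) (le_csInf ⟨2, hmem2⟩ hlb)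
end
end

section
/- For all centrally symmetric convex bodies K, L in R^n, d(K, L) ≤ n. -/
open Pointwise

noncomputable section

lemma algebra1 (R a b M t : ℝ) (hR : 1 < R) (hb0 : 0 ≤ b) (hb1 : b ≤ 1)
    (hcon : a^2 + b^2*(R^2-1) ≤ R^2) (ht0 : 0 ≤ t) (htM : t ≤ M) :
    b^2*M + (a^2-b^2)*t ≤ max M (R^2*t) := by
  have hM : 0 ≤ M := le_trans ht0 htM
  have hb2 : b^2 ≤ 1 := by nlinarith
  rcases le_total (R^2*t) M with h | h
  · refine le_trans ?_ (le_max_left _ _)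
    rcases le_total (b^2) (a^2) with h2 | h2
    · nlinarith [mul_nonneg (sub_nonneg.2 h2) (sub_nonneg.2 h),
        mul_nonneg hM (sub_nonneg.2 hcon), sq_nonneg R]
    · nlinarith [mul_nonneg (sub_nonneg.2 h2) ht0, mul_nonneg hM (sub_nonneg.2 hb2)]
  · refine le_trans ?_ (le_max_right _ _)
    nlinarith [mul_nonneg (mul_nonneg hb0 hb0) (sub_nonneg.2 h),
      mul_nonneg ht0 (sub_nonneg.2 hcon)]


lemma volinc (m : ℕ) (u : ℝ) (hu : 1 < u) :
    1 < u * (u*m/(u*m+(u-1)))^m := by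
  rcases Nat.eq_zero_or_pos m with rfl | hm
  · simpa using hu
  have hm' : (0:ℝ) < m := by exact_mod_cast hm
  have hu0 : (0:ℝ) < u := by linarith
  have hum : (0:ℝ) < u*m := by positivity
  set y : ℝ := (u-1)/(u*m) with hy
  have hy0 : 0 < y := div_pos (by linarith) hum
  have key : (1+y)^m < u := by
    have h1 : (1+y)^m ≤ Real.exp (y*m) := by
      calc (1+y)^m ≤ (Real.exp y)^m := by
            apply pow_le_pow_left₀ (by linarith) (by linarith [Real.add_one_le_exp y])
        _ = Real.exp (y*m) := by rw [← Real.exp_nat_mul, mul_comm]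
    have hym : y*m = (u-1)/u := by
      rw [hy]; field_simp
    have h2 : Real.exp ((u-1)/u) < u := by
      have hx : (1-u)/u ≠ 0 := div_ne_zero (by linarith) (by linarith)
      have h5 := Real.add_one_lt_exp hx
      have h3 : (1-u)/u + 1 = 1/u := by field_simp; ring
      have h4 : (1-u)/u = -((u-1)/u) := by ring
      rw [h3, h4, Real.exp_neg] at h5
      have he : 0 < Real.exp ((u-1)/u) := Real.exp_pos _
      rw [one_div] at h5
      exact (inv_lt_inv₀ hu0 he).mp h5
    rw [hym] at h1; linarith
  have h1y : (0:ℝ) < (1+y)^m := by positivity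
  have hfrac : u*m/(u*m+(u-1)) = 1/(1+y) := by
    rw [hy]; rw [div_eq_div_iff (by nlinarith) (by nlinarith)]; field_simp
  rw [hfrac, div_pow, one_pow, mul_one_div, lt_div_iff₀ h1y, one_mul]
  exact key

/-- The stretch map `y ↦ b • y + ((a-b)⟪y,w⟫) • w`. -/
def stretch {n : ℕ} (w : E n) (a b : ℝ) : E n →ₗ[ℝ] E n where
  toFun y := b • y + ((a - b) * (inner ℝ y w : ℝ)) • w
  map_add' y z := by
    simp [inner_add_left, smul_add]
    module
  map_smul' c y := by
    simp [inner_smul_left, smul_smul]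
    module

lemma stretch_apply {n : ℕ} (w : E n) (a b : ℝ) (y : E n) :
    stretch w a b y = b • y + ((a - b) * (inner ℝ y w : ℝ)) • w := rfl

lemma stretch_symm {n : ℕ} (w : E n) (a b : ℝ) (d y : E n) :
    (inner ℝ d (stretch w a b y) : ℝ) = (inner ℝ (stretch w a b d) y : ℝ) := by
  simp only [stretch_apply, inner_add_left, inner_add_right, real_inner_smul_left,
    real_inner_smul_right]
  rw [real_inner_comm w y]
  ring

lemma stretch_norm_sq {n : ℕ} (w : E n) (hw : ‖w‖ = 1) (a b : ℝ) (d : E n) :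
    ‖stretch w a b d‖^2 = b^2*‖d‖^2 + (a^2-b^2)*(inner ℝ d w : ℝ)^2 := by
  have h1 : ‖stretch w a b d‖^2 = (inner ℝ (stretch w a b d) (stretch w a b d) : ℝ) :=
    (real_inner_self_eq_norm_sq _).symm
  rw [h1]
  simp only [stretch_apply, inner_add_left, inner_add_right, real_inner_smul_left,
    real_inner_smul_right]
  have h2 : (inner ℝ d d : ℝ) = ‖d‖^2 := real_inner_self_eq_norm_sq d
  have h3 : (inner ℝ w w : ℝ) = 1 := by
    rw [real_inner_self_eq_norm_sq, hw]; norm_num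
  rw [real_inner_comm w d] at *
  rw [h2, h3]
  ring

lemma stretch_det {n : ℕ} (hn : 0 < n) (w : E n) (hw : ‖w‖ = 1) (a b : ℝ) :
    LinearMap.det (stretch w a b) = a * b^(n-1) := by
  classical
  set i0 : Fin n := ⟨0, hn⟩
  have hcard : Module.finrank ℝ (E n) = Fintype.card (Fin n) := by simp
  have horth : Orthonormal ℝ (({i0} : Set (Fin n)).restrict (fun _ : Fin n => w)) := by
    constructor
    · intro i; exact hw
    · intro i j hij
      exfalso
      apply hij
      have hi := i.2; have hj := j.2
      simp only [Set.mem_singleton_iff] at hi hj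
      exact Subtype.ext (hi.trans hj.symm)
  obtain ⟨o, ho⟩ := Orthonormal.exists_orthonormalBasis_extension_of_card_eq hcard horth
  have how : o i0 = w := ho i0 (Set.mem_singleton _)
  have happly : ∀ j, stretch w a b (o j) = (if j = i0 then a else b) • o j := by
    intro j
    rcases eq_or_ne j i0 with rfl | hj
    · have h1 : (inner ℝ w w : ℝ) = 1 := by
        rw [real_inner_self_eq_norm_sq, hw]; norm_num
      rw [how, stretch_apply, h1, if_pos rfl]
      module
    · have : (inner ℝ (o j) w : ℝ) = 0 := by
        rw [← how]
        exact o.orthonormal.2 hj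
      simp [stretch_apply, this, hj]
  have hmat : LinearMap.toMatrix o.toBasis o.toBasis (stretch w a b) =
      Matrix.diagonal (fun j => if j = i0 then a else b) := by
    ext i j
    rw [LinearMap.toMatrix_apply]
    rw [OrthonormalBasis.coe_toBasis, happly, map_smul]
    have hrepr : ∀ k, o.toBasis.repr (o k) = Finsupp.single k 1 := fun k => by
      rw [← OrthonormalBasis.coe_toBasis, Module.Basis.repr_self]
    rcases eq_or_ne i j with rfl | hij
    · simp only [hrepr, Finsupp.smul_single, smul_eq_mul, mul_one, Matrix.diagonal_apply_eq]
      split_ifs <;> simp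
    · simp only [hrepr, Finsupp.smul_single, smul_eq_mul, mul_one,
        Matrix.diagonal_apply_ne _ hij]
      split_ifs <;> simp [Finsupp.single_eq_of_ne' (Ne.symm hij)]
  rw [← LinearMap.det_toMatrix o.toBasis, hmat, Matrix.det_diagonal]
  rw [← Finset.mul_prod_erase Finset.univ _ (Finset.mem_univ i0)]
  simp only [if_pos rfl]
  congr 1
  rw [Finset.prod_congr rfl (fun j hj => ?_), Finset.prod_const]
  · congr 1
    rw [Finset.card_erase_of_mem (Finset.mem_univ i0), Finset.card_univ, Fintype.card_fin]
  · rw [if_neg (Finset.mem_erase.1 hj).1]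

lemma one_lt_of_sq {s : ℝ} (h0 : 0 ≤ s) (h : 1 < s^2) : 1 < s := by nlinarith

lemma mul_contra {x y : ℝ} (hx : 0 < x) (h1 : 1 < y) (h : x * y ≤ x) : False := by nlinarith

lemma max_sq {x y z : ℝ} (hx : 0 ≤ x) (hy : 0 ≤ y) (hz : 0 ≤ z)
    (h : z^2 ≤ max (x^2) (y^2)) : z ≤ max x y := by
  rcases le_total x y with h' | h'
  · have : z^2 ≤ y^2 := le_trans h (by rw [max_le_iff]; constructor <;> nlinarith)
    calc z ≤ y := by nlinarith
      _ ≤ max x y := le_max_right _ _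
  · have : z^2 ≤ x^2 := le_trans h (by rw [max_le_iff]; constructor <;> nlinarith)
    calc z ≤ x := by nlinarith
      _ ≤ max x y := le_max_left _ _

lemma stretch_image_subset {n : ℕ} (K : Set (E n)) (hconv : Convex ℝ K) (hcl : IsClosed K)
    (T : E n →L[ℝ] E n) (hT : ∀ y : E n, ‖y‖ ≤ 1 → T y ∈ K)
    (w : E n) (hw : ‖w‖ = 1) (R a b : ℝ) (hR : 1 < R)
    (hx : T (R • w) ∈ K) (hx' : -(T (R • w)) ∈ K)
    (hb0 : 0 ≤ b) (hb1 : b ≤ 1)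
    (hcon : a^2 + b^2*(R^2-1) ≤ R^2) :
    ∀ y : E n, ‖y‖ ≤ 1 → T (stretch w a b y) ∈ K := by
  intro y hy
  by_contra hp
  obtain ⟨f, u, hfK, hfu⟩ := geometric_hahn_banach_closed_point hconv hcl hp
  set c : E n := (InnerProductSpace.toDual ℝ (E n)).symm f with hc
  have hfc : ∀ v : E n, f v = (inner ℝ c v : ℝ) := by
    intro v
    rw [hc]
    exact (InnerProductSpace.toDual_symm_apply).symm
  set d : E n := (ContinuousLinearMap.adjoint T) c with hd
  have hdc : ∀ v : E n, (inner ℝ c (T v) : ℝ) = (inner ℝ d v : ℝ) := by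
    intro v
    rw [hd, ContinuousLinearMap.adjoint_inner_left]
  -- upper bound on f (T (stretch y))
  have hfp : f (T (stretch w a b y)) ≤ ‖stretch w a b d‖ := by
    rw [hfc, hdc, stretch_symm]
    calc (inner ℝ (stretch w a b d) y : ℝ) ≤ ‖stretch w a b d‖ * ‖y‖ := real_inner_le_norm _ _
      _ ≤ ‖stretch w a b d‖ * 1 := by
          apply mul_le_mul_of_nonneg_left hy (norm_nonneg _)
      _ = _ := mul_one _
  -- ‖stretch d‖ ≤ max ‖d‖ (R * |⟪d,w⟫|)
  have hCS : (inner ℝ d w : ℝ)^2 ≤ ‖d‖^2 := by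
    have h1 := abs_real_inner_le_norm d w
    rw [hw, mul_one] at h1
    nlinarith [abs_nonneg (inner ℝ d w : ℝ), sq_abs (inner ℝ d w : ℝ)]
  have hkey : ‖stretch w a b d‖ ≤ max (‖d‖) (R * |(inner ℝ d w : ℝ)|) := by
    apply max_sq (norm_nonneg _) (by positivity) (norm_nonneg _)
    rw [stretch_norm_sq w hw]
    calc b^2*‖d‖^2 + (a^2-b^2)*(inner ℝ d w : ℝ)^2
        ≤ max (‖d‖^2) (R^2 * (inner ℝ d w : ℝ)^2) :=
          algebra1 R a b (‖d‖^2) ((inner ℝ d w : ℝ)^2) hR hb0 hb1 hcon (sq_nonneg _) hCS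
      _ = max (‖d‖^2) ((R * |(inner ℝ d w : ℝ)|)^2) := by
          rw [mul_pow, sq_abs]
  -- lower bounds from K
  have h1 : ‖d‖ < u := by
    rcases eq_or_ne d 0 with h0 | hd0
    · have h5 := hfK (T 0) (hT 0 (by simp))
      rw [hfc, hdc] at h5
      rw [h0] at h5 ⊢
      simpa using h5
    · have hnd : ‖(‖d‖⁻¹ • d : E n)‖ ≤ 1 := by
        rw [norm_smul, norm_inv, norm_norm, inv_mul_cancel₀ (norm_ne_zero_iff.2 hd0)]
      have := hfK _ (hT _ hnd)
      rw [hfc, hdc, real_inner_smul_right, real_inner_self_eq_norm_sq] at this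
      rw [inv_mul_eq_div, sq, mul_self_div_self] at this  -- ‖d‖⁻¹ * ‖d‖^2 = ‖d‖
      exact this
  have h2 : R * |(inner ℝ d w : ℝ)| < u := by
    have hp1 := hfK _ hx
    have hp2 := hfK _ hx'
    rw [hfc, hdc, real_inner_smul_right] at hp1
    rw [hfc, inner_neg_right, hdc, real_inner_smul_right] at hp2
    rcases abs_cases (inner ℝ d w : ℝ) with ⟨he, _⟩ | ⟨he, _⟩
    · rw [he]; exact hp1
    · rw [he, mul_neg]; exact hp2
  have := hfu.trans_le hfp
  have := hkey.trans_lt (max_lt h1 h2)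
  linarith

lemma exists_max (n : ℕ) (K : Set (E n)) (hcomp : IsCompact K)
    (ε : ℝ) (hε : 0 < ε) (hball : Metric.closedBall (0 : E n) ε ⊆ K) :
    ∃ T : E n →L[ℝ] E n, (∀ y : E n, ‖y‖ ≤ 1 → T y ∈ K) ∧
      0 < |LinearMap.det (T : E n →ₗ[ℝ] E n)| ∧
      ∀ S : E n →L[ℝ] E n, (∀ y : E n, ‖y‖ ≤ 1 → S y ∈ K) →
        |LinearMap.det (S : E n →ₗ[ℝ] E n)| ≤ |LinearMap.det (T : E n →ₗ[ℝ] E n)| := by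
  classical
  set A : Set (E n →L[ℝ] E n) := {T | ∀ y : E n, ‖y‖ ≤ 1 → T y ∈ K} with hA
  have hKcl : IsClosed K := hcomp.isClosed
  have hAcl : IsClosed A := by
    have : A = ⋂ y ∈ Metric.closedBall (0 : E n) 1, {T : E n →L[ℝ] E n | T y ∈ K} := by
      ext T
      simp only [hA, Set.mem_setOf_eq, Set.mem_iInter, Metric.mem_closedBall,
        dist_zero_right]
    rw [this]
    refine isClosed_biInter fun y _ => ?_
    exact hKcl.preimage (ContinuousLinearMap.apply ℝ (E n) y).continuous
  obtain ⟨C, hC⟩ := hcomp.isBounded.subset_closedBall 0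
  have hAbd : Bornology.IsBounded A := by
    rw [Metric.isBounded_iff_subset_closedBall 0]
    refine ⟨C, fun T hT => ?_⟩
    rw [Metric.mem_closedBall, dist_zero_right]
    refine ContinuousLinearMap.opNorm_le_bound T ?_ (fun y => ?_)
    · rcases hC (hball (Metric.mem_closedBall_self hε.le)) with h
      rw [Metric.mem_closedBall, dist_zero_right, norm_zero] at h
      exact h
    · rcases eq_or_ne y 0 with rfl | hy0
      · simp
      · have h1 : ‖(‖y‖⁻¹ • y : E n)‖ ≤ 1 := by
          rw [norm_smul, norm_inv, norm_norm, inv_mul_cancel₀ (norm_ne_zero_iff.2 hy0)]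
        have h2 := hC (hT _ h1)
        rw [Metric.mem_closedBall, dist_zero_right, map_smul, norm_smul, norm_inv,
          norm_norm] at h2
        rw [inv_mul_le_iff₀ (norm_pos_iff.2 hy0)] at h2
        linarith [h2]
  have hAcomp : IsCompact A := Metric.isCompact_of_isClosed_isBounded hAcl hAbd
  have hmem : (ε • ContinuousLinearMap.id ℝ (E n)) ∈ A := by
    intro y hy
    apply hball
    rw [Metric.mem_closedBall, dist_zero_right]
    simp only [ContinuousLinearMap.smul_apply, ContinuousLinearMap.id_apply, norm_smul,
      Real.norm_eq_abs, abs_of_pos hε]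
    calc ε * ‖y‖ ≤ ε * 1 := mul_le_mul_of_nonneg_left hy hε.le
      _ = ε := mul_one _
  have hAne : A.Nonempty := ⟨_, hmem⟩
  have hcont : Continuous fun T : E n →L[ℝ] E n => |LinearMap.det (T : E n →ₗ[ℝ] E n)| :=
    ContinuousLinearMap.continuous_det.abs
  obtain ⟨T, hTA, hTmax⟩ := hAcomp.exists_isMaxOn hAne hcont.continuousOn
  refine ⟨T, hTA, ?_, fun S hS => hTmax hS⟩
  have h6 := hTmax hmem
  have h7 : |LinearMap.det (((ε • ContinuousLinearMap.id ℝ (E n) : E n →L[ℝ] E n)) :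
      E n →ₗ[ℝ] E n)| = ε^n := by
    have : (((ε • ContinuousLinearMap.id ℝ (E n) : E n →L[ℝ] E n)) : E n →ₗ[ℝ] E n)
        = ε • (LinearMap.id : E n →ₗ[ℝ] E n) := by
      ext v; simp
    rw [this, LinearMap.det_smul, LinearMap.det_id, mul_one]
    simp [abs_of_pos hε, abs_pow]
  calc (0:ℝ) < ε^n := pow_pos hε n
    _ = _ := h7.symm
    _ ≤ _ := h6

theorem john_symm (n : ℕ) (hn : 0 < n) (K : Set (E n)) (hcomp : IsCompact K)
    (hconv : Convex ℝ K) (hint : (interior K).Nonempty) (hsym : ∀ x ∈ K, -x ∈ K) :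
    ∃ T : E n ≃ₗ[ℝ] E n, (∀ y : E n, ‖y‖ ≤ 1 → T y ∈ K) ∧
      ∀ x ∈ K, ‖T.symm x‖ ≤ Real.sqrt n := by
  -- 0 is an interior point
  have hKneg : ∀ x, x ∈ K ↔ -x ∈ K := by
    intro x
    exact ⟨fun h => hsym x h, fun h => by simpa using hsym (-x) h⟩
  have h0 : (0 : E n) ∈ interior K := by
    obtain ⟨p, hp⟩ := hint
    have hnegK : -K = K := by
      ext x
      rw [Set.mem_neg, ← hKneg]
    have hp' : -p ∈ interior K := by
      have hsub : -(interior K) ⊆ interior K := by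
        apply interior_maximal _ isOpen_interior.neg
        intro x hx
        rw [Set.mem_neg] at hx
        rw [hKneg]
        exact interior_subset hx
      exact hsub (Set.neg_mem_neg.2 hp)
    have hmid := hconv.interior hp hp' (by norm_num : (0:ℝ) ≤ 1/2)
      (by norm_num : (0:ℝ) ≤ 1/2) (by norm_num)
    have h00 : (1/2 : ℝ)•p + (1/2 : ℝ)•(-p) = (0 : E n) := by module
    rwa [h00] at hmid
  obtain ⟨ε', hε', hball'⟩ := Metric.mem_nhds_iff.1 (mem_interior_iff_mem_nhds.1 h0)
  have hball : Metric.closedBall (0 : E n) (ε'/2) ⊆ K := by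
    refine subset_trans ?_ hball'
    intro z hz
    rw [Metric.mem_closedBall] at hz
    rw [Metric.mem_ball]
    linarith
  obtain ⟨T₀, hT₀K, hdet, hmax⟩ := exists_max n K hcomp (ε'/2) (by linarith) hball
  set Teq : E n ≃ₗ[ℝ] E n := LinearMap.equivOfDetNeZero (T₀ : E n →ₗ[ℝ] E n)
    (fun h => by rw [h] at hdet; simp at hdet) with hTeqdef
  have hTeqcoe : (Teq : E n →ₗ[ℝ] E n) = (T₀ : E n →ₗ[ℝ] E n) :=
    LinearEquiv.coe_ofIsUnitDet _
  clear_value Teq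
  have hTeq : ∀ v, Teq v = T₀ v := fun v => by
    rw [← LinearEquiv.coe_coe, hTeqcoe]; rfl
  refine ⟨Teq, fun y hy => by rw [hTeq]; exact hT₀K y hy, ?_⟩
  intro x hxK
  by_contra hRbig
  push_neg at hRbig
  set z : E n := Teq.symm x with hz
  set R : ℝ := ‖z‖ with hRdef
  clear_value z R
  have hsqn1 : (1:ℝ) ≤ Real.sqrt n := by
    rw [show (1:ℝ) = Real.sqrt 1 by simp]
    exact Real.sqrt_le_sqrt (by exact_mod_cast hn)
  have hR1 : 1 < R := lt_of_le_of_lt hsqn1 hRbig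
  have hR0 : 0 < R := by linarith
  have hRn : (n : ℝ) < R^2 := (Real.sqrt_lt' hR0).1 hRbig
  have hn' : (0:ℝ) < n := by exact_mod_cast hn
  have hn1 : (1:ℝ) ≤ n := by exact_mod_cast hn
  -- the unit direction
  set w : E n := R⁻¹ • z with hwdef
  have hw : ‖w‖ = 1 := by
    rw [hwdef, norm_smul, norm_inv, Real.norm_eq_abs, abs_of_pos hR0, ← hRdef,
      inv_mul_cancel₀ (ne_of_gt hR0)]
  clear_value w
  have hRw : R • w = z := by
    rw [hwdef, smul_smul, mul_inv_cancel₀ (ne_of_gt hR0), one_smul]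
  have hxT : T₀ (R • w) ∈ K := by
    rw [← hTeq, hRw, hz, Teq.apply_symm_apply]
    exact hxK
  have hxT' : -(T₀ (R • w)) ∈ K := by
    rw [← hTeq, hRw, hz, Teq.apply_symm_apply]
    exact hsym x hxK
  -- the stretch parameters
  set u : ℝ := R^2 / n with hudef
  have hu : 1 < u := (one_lt_div hn').2 hRn
  clear_value u
  set a : ℝ := Real.sqrt u with hadef
  set b : ℝ := Real.sqrt ((R^2 - u)/(R^2-1)) with hbdef
  have hR21 : (0:ℝ) < R^2 - 1 := by nlinarith
  have hnum : (0:ℝ) ≤ R^2 - u := by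
    rw [hudef, sub_nonneg, div_le_iff₀ hn']
    nlinarith
  have ha2 : a^2 = u := Real.sq_sqrt (by positivity)
  clear_value a
  have ha0 : 0 ≤ a := hadef ▸ Real.sqrt_nonneg _
  have hb2 : b^2 = (R^2 - u)/(R^2-1) := Real.sq_sqrt (by positivity)
  clear_value b
  have hb0 : 0 ≤ b := hbdef ▸ Real.sqrt_nonneg _
  have hb1 : b ≤ 1 := by
    have h1 : b^2 ≤ 1 := by
      rw [hb2, div_le_one hR21]
      linarith
    nlinarith
  have hcon : a^2 + b^2*(R^2-1) = R^2 := by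
    rw [ha2, hb2, div_mul_cancel₀ _ (ne_of_gt hR21)]
    ring
  have hS := stretch_image_subset K hconv hcomp.isClosed T₀ hT₀K w hw R a b hR1
    hxT hxT' hb0 hb1 (le_of_eq hcon)
  set S' : E n →L[ℝ] E n := T₀.comp (LinearMap.toContinuousLinearMap (stretch w a b))
    with hS'def
  clear_value S'
  have hS'mem : ∀ y : E n, ‖y‖ ≤ 1 → S' y ∈ K := by
    intro y hy
    rw [hS'def]
    exact hS y hy
  have hdc : LinearMap.det ((S' : E n →ₗ[ℝ] E n)) =
      LinearMap.det ((T₀ : E n →ₗ[ℝ] E n)) * LinearMap.det (stretch w a b) := by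
    rw [hS'def]
    rw [ContinuousLinearMap.toLinearMap_comp, LinearMap.coe_toContinuousLinearMap,
      LinearMap.det_comp]
  have hds : LinearMap.det (stretch w a b) = a * b^(n-1) := stretch_det hn w hw a b
  -- the crucial inequality 1 < a * b^(n-1)
  have hcast : ((n-1 : ℕ) : ℝ) = (n:ℝ) - 1 := by
    rw [Nat.cast_sub hn]
    simp
  have hvol := volinc (n-1) u hu
  have hab2 : (a * b^(n-1))^2 = u * (u*((n-1:ℕ):ℝ)/(u*((n-1:ℕ):ℝ)+(u-1)))^(n-1) := by
    have e1 : (a * b^(n-1))^2 = a^2 * (b^2)^(n-1) := by ring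
    rw [e1, ha2, hb2]
    congr 1
    congr 1
    rw [hcast]
    have e2 : R^2 - u = u * ((n:ℝ) - 1) := by
      rw [hudef]
      field_simp
    have e3 : R^2 - 1 = u * ((n:ℝ) - 1) + (u - 1) := by
      rw [hudef]
      field_simp
      ring
    rw [e2, e3]
  have habgt : 1 < a * b^(n-1) :=
    one_lt_of_sq (mul_nonneg ha0 (pow_nonneg hb0 (n-1))) (by rw [hab2]; exact hvol)
  -- contradiction with maximality
  have hle := hmax S' hS'mem
  rw [hdc, abs_mul, hds] at hle
  have habs : |a * b^(n-1)| = a * b^(n-1) :=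
    abs_of_nonneg (mul_nonneg ha0 (pow_nonneg hb0 (n-1)))
  rw [habs] at hle
  exact mul_contra hdet habgt hle

lemma translate_body {n : ℕ} (K : Set (E n)) (hK : IsConvexBody K) (c : E n)
    (hc : ∀ x, x ∈ K ↔ (2 : ℝ) • c - x ∈ K) :
    IsCompact ((-c) +ᵥ K) ∧ Convex ℝ ((-c) +ᵥ K) ∧ (interior ((-c) +ᵥ K)).Nonempty ∧
      ∀ x ∈ ((-c) +ᵥ K), -x ∈ ((-c) +ᵥ K) := by
  refine ⟨?_, hK.2.1.vadd _, ?_, ?_⟩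
  · rw [← Set.image_vadd]
    exact hK.1.image (continuous_const_vadd _)
  · obtain ⟨p, hp⟩ := hK.2.2
    refine ⟨(-c) +ᵥ p, ?_⟩
    rw [← Set.image_vadd]
    have h4 : ((fun x => -c +ᵥ x) '' K) = (Homeomorph.addLeft (-c)) '' K := rfl
    rw [h4, ← Homeomorph.image_interior]
    exact ⟨p, hp, rfl⟩
  · intro x hx
    rw [Set.mem_vadd_set_iff_neg_vadd_mem] at hx ⊢
    have h1 := (hc _).1 hx
    have h2 : (2 : ℝ) • c - (- -c +ᵥ x) = - -c +ᵥ -x := by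
      simp only [vadd_eq_add, neg_neg]
      module
    rwa [h2] at h1


/-- For all centrally symmetric convex bodies `K, L ⊆ ℝⁿ`, `d(K, L) ≤ n`. -/
theorem stmt15 (n : ℕ) (K L : Set (E n)) (hK : IsConvexBody K)
    (hL : IsConvexBody L) (hKsym : IsCentrallySymmetric K)
    (hLsym : IsCentrallySymmetric L) :
    bmDist K L ≤ n := by
  obtain ⟨cK, hcK⟩ := hKsym
  obtain ⟨cL, hcL⟩ := hLsym
  rcases Nat.eq_zero_or_pos n with rfl | hn
  · -- dimension zero: the space is a single point
    haveI : Subsingleton (E 0) := by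
      constructor
      intro x y
      ext i
      exact i.elim0
    have hKne : K.Nonempty := hK.2.2.mono interior_subset
    have hLne : L.Nonempty := hL.2.2.mono interior_subset
    have hS : {r : ℝ | 0 < r ∧ ∃ (T : E 0 ≃ₗ[ℝ] E 0) (u v : E 0),
        (u +ᵥ K) ⊆ (T : E 0 →ₗ[ℝ] E 0) '' (v +ᵥ L) ∧
        (T : E 0 →ₗ[ℝ] E 0) '' (v +ᵥ L) ⊆ r • (u +ᵥ K)} = Set.Ioi (0:ℝ) := by
      ext r
      simp only [Set.mem_setOf_eq, Set.mem_Ioi]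
      constructor
      · rintro ⟨hr, -⟩; exact hr
      · intro hr
        refine ⟨hr, LinearEquiv.refl ℝ (E 0), 0, 0, ?_, ?_⟩
        · intro x hx
          obtain ⟨l, hl⟩ := hLne
          exact ⟨(0:E 0) +ᵥ l, ⟨l, hl, rfl⟩, Subsingleton.elim _ _⟩
        · intro y hy
          obtain ⟨k, hk⟩ := hKne
          exact ⟨(0:E 0) +ᵥ k, ⟨k, hk, rfl⟩, Subsingleton.elim _ _⟩
    rw [bmDist, hS, csInf_Ioi]
    norm_num
  · -- positive dimension
    obtain ⟨hK₀c, hK₀v, hK₀i, hK₀s⟩ := translate_body K hK cK hcK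
    obtain ⟨hL₀c, hL₀v, hL₀i, hL₀s⟩ := translate_body L hL cL hcL
    obtain ⟨TK, hTK1, hTK2⟩ := john_symm n hn _ hK₀c hK₀v hK₀i hK₀s
    obtain ⟨TL, hTL1, hTL2⟩ := john_symm n hn _ hL₀c hL₀v hL₀i hL₀s
    have hn' : (0:ℝ) < n := by exact_mod_cast hn
    have hsn : (0:ℝ) < Real.sqrt n := Real.sqrt_pos.2 hn'
    have hsn0 : (Real.sqrt n : ℝ) ≠ 0 := ne_of_gt hsn
    have hsnn : Real.sqrt n * Real.sqrt n = (n:ℝ) := Real.mul_self_sqrt hn'.le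
    set Φ : E n ≃ₗ[ℝ] E n :=
      TL.symm.trans (TK.trans (LinearEquiv.smulOfNeZero ℝ (E n) (Real.sqrt n) hsn0))
      with hΦdef
    have hΦ : ∀ x, Φ x = Real.sqrt n • TK (TL.symm x) := fun x => rfl
    clear_value Φ
    have hmem : (n : ℝ) ∈ {r : ℝ | 0 < r ∧ ∃ (T : E n ≃ₗ[ℝ] E n) (u v : E n),
        (u +ᵥ K) ⊆ (T : E n →ₗ[ℝ] E n) '' (v +ᵥ L) ∧
        (T : E n →ₗ[ℝ] E n) '' (v +ᵥ L) ⊆ (n:ℝ) • (u +ᵥ K)} := by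
      refine ⟨hn', Φ, -cK, -cL, ?_, ?_⟩
      · intro x hx
        have hnorm : ‖((Real.sqrt n)⁻¹ • TK.symm x : E n)‖ ≤ 1 := by
          rw [norm_smul, norm_inv, Real.norm_eq_abs, abs_of_pos hsn]
          rw [inv_mul_le_iff₀ hsn, mul_one]
          exact hTK2 x hx
        refine ⟨TL ((Real.sqrt n)⁻¹ • TK.symm x), hTL1 _ hnorm, ?_⟩
        rw [LinearEquiv.coe_coe, hΦ, TL.symm_apply_apply, map_smul, smul_smul,
          mul_inv_cancel₀ hsn0, one_smul, TK.apply_symm_apply]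
      · rintro y ⟨z, hz, rfl⟩
        rw [LinearEquiv.coe_coe, hΦ]
        have hnorm : ‖((Real.sqrt n)⁻¹ • TL.symm z : E n)‖ ≤ 1 := by
          rw [norm_smul, norm_inv, Real.norm_eq_abs, abs_of_pos hsn]
          rw [inv_mul_le_iff₀ hsn, mul_one]
          exact hTL2 z hz
        have hk : TK ((Real.sqrt n)⁻¹ • TL.symm z) ∈ (-cK) +ᵥ K := hTK1 _ hnorm
        have he : Real.sqrt n • TK (TL.symm z) =
            (n:ℝ) • TK ((Real.sqrt n)⁻¹ • TL.symm z) := by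
          have hscal : Real.sqrt n = (n:ℝ) * (Real.sqrt n)⁻¹ := by
            rw [eq_comm, mul_inv_eq_iff_eq_mul₀ hsn0, hsnn]
          rw [map_smul, smul_smul, ← hscal]
        rw [he]
        exact Set.smul_mem_smul_set hk
    rw [bmDist]
    apply csInf_le
    · exact ⟨0, fun r hr => hr.1.le⟩
    · exact hmem
end
end
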